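/- arXiv:1905.10287 — 2 statements merged into one kernel-verified Lean document; each statement's English description precedes it below -/
import Mathlib

section
/- Let Φ be one of the symbols Ω, Γ and Ψ one of the symbols 𝒪, Ω, Γ, with the couple ⟨Φ,Ψ⟩ different from ⟨Ω,𝒪⟩, and let X be an infinite Hausdorff topological space. Then X is an S₁(Φ,Ψ)-space if and only if for every h ∈ USC*_p(X) the family USC*_p(X) satisfies the selection principle S₁(Φ_h,Ψ_h). If moreover X possesses property (ε), the equivalence holds also for the couple ⟨Ω,𝒪⟩. -/
open Set Filter Topology

namespace Selectors

variable {X : Type*}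

/-- Kinds of covers / of pointwise properties: `o` (ordinary covers / 𝒪),
`omega` (ω-covers / Ω), `gamma` (γ-covers / Γ). -/
inductive CoverKind : Type
  | o | omega | gamma

/-- `f` is a bounded upper semicontinuous real function on `X`. -/
def IsUSCb [TopologicalSpace X] (f : X → ℝ) : Prop :=
  (∀ a : ℝ, IsOpen {x | f x < a}) ∧ ∃ M : ℝ, ∀ x, |f x| ≤ M

/-- `USC*_p(X)`: the set of bounded upper semicontinuous real functions on `X`,
regarded as a subset of `X → ℝ` with the product (pointwise convergence) topology. -/
def USCb (X : Type*) [TopologicalSpace X] : Set (X → ℝ) := {f | IsUSCb f}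

/-- `C*_p(X)`: the set of bounded continuous real functions on `X`. -/
def Cb (X : Type*) [TopologicalSpace X] : Set (X → ℝ) :=
  {f | Continuous f ∧ ∃ M : ℝ, ∀ x, |f x| ≤ M}

/-- `𝒰` is a cover of `X`. -/
def IsCover (𝒰 : Set (Set X)) : Prop := ∀ x : X, ∃ U ∈ 𝒰, x ∈ U

/-- The (not necessarily open) cover condition of the given kind:
an `o`-cover is a cover; an ω-cover is a cover not containing `X` such that every
finite subset of `X` is contained in a member; a γ-cover is an infinite cover such
that each point belongs to all but finitely many members. -/
def kindSets (k : CoverKind) (𝒰 : Set (Set X)) : Prop :=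
  match k with
  | .o => IsCover 𝒰
  | .omega => IsCover 𝒰 ∧ Set.univ ∉ 𝒰 ∧ ∀ F : Set X, F.Finite → ∃ U ∈ 𝒰, F ⊆ U
  | .gamma => IsCover 𝒰 ∧ 𝒰.Infinite ∧ ∀ x : X, {U ∈ 𝒰 | x ∉ U}.Finite

/-- The family `𝒪(X)`, `Ω(X)` or `Γ(X)` of open covers/ω-covers/γ-covers of `X`. -/
def OpenKindCovers (X : Type*) [TopologicalSpace X] (k : CoverKind) : Set (Set (Set X)) :=
  {𝒰 | (∀ U ∈ 𝒰, IsOpen U) ∧ kindSets k 𝒰}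

/-- The selection principle `S₁(A, B)`. -/
def S1 {α : Type*} (A B : Set (Set α)) : Prop :=
  ∀ u : ℕ → Set α, (∀ n, u n ∈ A) →
    ∃ sel : ℕ → α, (∀ n, sel n ∈ u n) ∧ Set.range sel ∈ B

/-- The selection principle `S_fin(A, B)`. -/
def Sfin {α : Type*} (A B : Set (Set α)) : Prop :=
  ∀ u : ℕ → Set α, (∀ n, u n ∈ A) →
    ∃ V : ℕ → Set α, (∀ n, V n ⊆ u n ∧ (V n).Finite) ∧ (⋃ n, V n) ∈ B

/-- Property `(𝒪_h)` of a family `F` of real functions. -/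
def PropO (h : X → ℝ) (F : Set (X → ℝ)) : Prop :=
  ∀ x : X, h x ∈ closure ((fun f : X → ℝ => f x) '' F)

/-- Property `(Ω_h)`: `h ∉ F` and `h` belongs to the closure of `F` in `ℝ^X`. -/
def PropOmega (h : X → ℝ) (F : Set (X → ℝ)) : Prop :=
  h ∉ F ∧ h ∈ closure F

/-- Property `(Γ_h)`. -/
def PropGamma (h : X → ℝ) (F : Set (X → ℝ)) : Prop :=
  F.Infinite ∧ ∀ ε : ℝ, 0 < ε → ∀ x : X, {f ∈ F | ε ≤ |f x - h x|}.Finite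

/-- Property `(Φ_h)` for `Φ = 𝒪, Ω, Γ`. -/
def kindProp (k : CoverKind) (h : X → ℝ) (F : Set (X → ℝ)) : Prop :=
  match k with
  | .o => PropO h F
  | .omega => PropOmega h F
  | .gamma => PropGamma h F

/-- The family `Φ_h(H) = {F ⊆ H : F has (Φ_h) and ∀ f ∈ F, f ≥ h ∧ f - h ∈ H}`. -/
def PhiH (k : CoverKind) (h : X → ℝ) (H : Set (X → ℝ)) : Set (Set (X → ℝ)) :=
  {F | F ⊆ H ∧ kindProp k h F ∧ ∀ f ∈ F, h ≤ f ∧ f - h ∈ H}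

/-- `F ⊆ H` is sequentially dense in `H` (with respect to pointwise convergence). -/
def SeqDenseIn (F H : Set (X → ℝ)) : Prop :=
  F ⊆ H ∧ ∀ f ∈ H, ∃ u : ℕ → (X → ℝ), (∀ n, u n ∈ F) ∧
    Filter.Tendsto u Filter.atTop (nhds f)

/-- `F ⊆ H` is dense in `H`. -/
def DenseIn (F H : Set (X → ℝ)) : Prop :=
  F ⊆ H ∧ H ⊆ closure F

/-- `F` is pointwise dense: `{f x : f ∈ F}` is dense in `ℝ` for every `x`. -/
def PointwiseDense (F : Set (X → ℝ)) : Prop :=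
  ∀ x : X, Dense {y : ℝ | ∃ f ∈ F, f x = y}

/-- `F ⊆ H` is upper sequentially dense in `H`. -/
def UpperSeqDenseIn (F H : Set (X → ℝ)) : Prop :=
  F ⊆ H ∧ ∀ f ∈ H, ∃ u : ℕ → (X → ℝ),
    (∀ n, u n ∈ F ∧ f ≤ u n ∧ u n - f ∈ H) ∧
    Filter.Tendsto u Filter.atTop (nhds f)

/-- `F ⊆ H` is upper dense in `H`: for every `f ∈ H` the set
`{h ∈ F : h ≥ f ∧ h - f ∈ H}` is dense in `{h ∈ H : h ≥ f}`. -/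
def UpperDenseIn (F H : Set (X → ℝ)) : Prop :=
  F ⊆ H ∧ ∀ f ∈ H, {g | g ∈ H ∧ f ≤ g} ⊆ closure {g | g ∈ F ∧ f ≤ g ∧ g - f ∈ H}

/-- `𝒮(H)`: the family of sequentially dense subsets of `H`. -/
def Sfam (H : Set (X → ℝ)) : Set (Set (X → ℝ)) := {F | SeqDenseIn F H}

/-- `𝒟(H)`: the family of dense subsets of `H`. -/
def Dfam (H : Set (X → ℝ)) : Set (Set (X → ℝ)) := {F | DenseIn F H}

/-- `𝒫(H)`: the family of pointwise dense subsets of `H`. -/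
def Pfam (H : Set (X → ℝ)) : Set (Set (X → ℝ)) := {F | F ⊆ H ∧ PointwiseDense F}

/-- `Φ̃↑(H)`: for `Φ = Γ` the upper sequentially dense subsets, for `Φ = Ω`
the upper dense subsets, for `Φ = 𝒪` the pointwise dense subsets of `H`. -/
def upTilde (k : CoverKind) (H : Set (X → ℝ)) : Set (Set (X → ℝ)) :=
  match k with
  | .o => Pfam H
  | .omega => {F | UpperDenseIn F H}
  | .gamma => {F | UpperSeqDenseIn F H}

/-- `H` is separable: it has a countable dense subset. -/
def SeparableSet (H : Set (X → ℝ)) : Prop := ∃ D, D.Countable ∧ DenseIn D H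

/-- `H` is sequentially separable: it has a countable sequentially dense subset. -/
def SeqSeparableSet (H : Set (X → ℝ)) : Prop := ∃ D, D.Countable ∧ SeqDenseIn D H

/-- Property `(ε)`: every open ω-cover contains a countable ω-subcover. -/
def PropEps (X : Type*) [TopologicalSpace X] : Prop :=
  ∀ 𝒰 : Set (Set X), 𝒰 ∈ OpenKindCovers X CoverKind.omega →
    ∃ 𝒱 ⊆ 𝒰, 𝒱.Countable ∧ 𝒱 ∈ OpenKindCovers X CoverKind.omega

/-- `S` is an `F_σ` set with respect to the topology `t`. -/
def IsFsigmaIn (t : TopologicalSpace X) (S : Set X) : Prop :=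
  ∃ C : ℕ → Set X, (∀ n, IsClosed[t] (C n)) ∧ S = ⋃ n, C n

/-- `S` is locally closed with respect to `t`: an intersection of a `t`-open
and a `t`-closed set. -/
def IsLocallyClosedIn (t : TopologicalSpace X) (S : Set X) : Prop :=
  ∃ U F : Set X, IsOpen[t] U ∧ IsClosed[t] F ∧ S = U ∩ F

/-- `S` is a cozero set with respect to `t`. -/
def IsCozeroIn (t : TopologicalSpace X) (S : Set X) : Prop :=
  ∃ f : X → ℝ, @Continuous X ℝ t inferInstance f ∧ S = {x | f x ≠ 0}

/-- The `OB`-property of `⟨X, t⟩`: there is a separable metrizable topology `t'`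
on `X` weaker than `t` such that every locally closed subset of `⟨X, t⟩` is an
`F_σ`-set in `t'`. -/
def OBProperty (X : Type*) [t : TopologicalSpace X] : Prop :=
  ∃ t' : TopologicalSpace X,
    (∀ s : Set X, IsOpen[t'] s → IsOpen[t] s) ∧
    @TopologicalSpace.MetrizableSpace X t' ∧
    @TopologicalSpace.SeparableSpace X t' ∧
    ∀ S : Set X, IsLocallyClosedIn t S → IsFsigmaIn t' S

/-- The `V`-property of `⟨X, t⟩`: there is a separable metrizable topology `t'`
on `X` weaker than `t` such that every cozero subset of `⟨X, t⟩` is an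
`F_σ`-set in `t'`. -/
def VProperty (X : Type*) [t : TopologicalSpace X] : Prop :=
  ∃ t' : TopologicalSpace X,
    (∀ s : Set X, IsOpen[t'] s → IsOpen[t] s) ∧
    @TopologicalSpace.MetrizableSpace X t' ∧
    @TopologicalSpace.SeparableSpace X t' ∧
    ∀ S : Set X, IsCozeroIn t S → IsFsigmaIn t' S

/-- `iw(X) = ℵ₀`: `X` can be mapped by a one-to-one continuous map onto a
Tychonoff space of countable weight. -/
def IWCountable (X : Type*) [TopologicalSpace X] : Prop :=
  ∃ (Y : Type) (tY : TopologicalSpace Y) (f : X → Y),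
    @Continuous X Y _ tY f ∧ Function.Bijective f ∧
    @T35Space Y tY ∧ @SecondCountableTopology Y tY

/-- `Φ^sh(X)`: the family of open shrinkable φ-covers of `X`. -/
def ShFam (X : Type*) [TopologicalSpace X] (k : CoverKind) : Set (Set (Set X)) :=
  {𝒰 | 𝒰 ∈ OpenKindCovers X k ∧
    ∃ 𝒲 ∈ OpenKindCovers X k, ∀ W ∈ 𝒲, ∃ U ∈ 𝒰, closure W ⊆ U}

/-- A zero set. -/
def IsZeroSet [TopologicalSpace X] (S : Set X) : Prop :=
  ∃ f : X → ℝ, Continuous f ∧ S = {x | f x = 0}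

/-- A cozero set. -/
def IsCozeroSet [TopologicalSpace X] (S : Set X) : Prop :=
  ∃ f : X → ℝ, Continuous f ∧ S = {x | f x ≠ 0}

/-- `Φ^fsh_cz(X)`: the family of functionally shrinkable φ-covers of `X`
consisting of cozero sets. -/
def FshCzFam (X : Type*) [TopologicalSpace X] (k : CoverKind) : Set (Set (Set X)) :=
  {𝒰 | (∀ U ∈ 𝒰, IsCozeroSet U) ∧ kindSets k 𝒰 ∧
    ∃ 𝒲 : Set (Set X), (∀ W ∈ 𝒲, IsZeroSet W) ∧ kindSets k 𝒲 ∧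
      ∀ W ∈ 𝒲, ∃ U ∈ 𝒰, closure W ⊆ U}

/-- The function `f_{U,g}`: equal to `0` on `U` and to `1 + sup |g|` off `U`. -/
noncomputable def fU (U : Set X) (g : X → ℝ) : X → ℝ :=
  Uᶜ.indicator fun _ => 1 + ⨆ y, |g y|

/-- The family `S(𝒰) = {f_{U,g} + g : U ∈ 𝒰, g ∈ USC*_p(X)}`. -/
def SU [TopologicalSpace X] (𝒰 : Set (Set X)) : Set (X → ℝ) :=
  {f | ∃ U ∈ 𝒰, ∃ g ∈ USCb X, f = fU U g + g}

/-- The Sorgenfrey topology on `ℝ`, generated by the half-open intervals `[a, b)`. -/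
def sorgenfreyTop : TopologicalSpace ℝ :=
  TopologicalSpace.generateFrom {s | ∃ a b : ℝ, s = Set.Ico a b}

/-- The Sorgenfrey plane topology on `ℝ × ℝ`. -/
def sorgenfreyPlaneTop : TopologicalSpace (ℝ × ℝ) :=
  @instTopologicalSpaceProd ℝ ℝ sorgenfreyTop sorgenfreyTop


section Aux0

variable {X : Type*}

/-- The `ε`-sequence used in the proofs. -/
noncomputable def eps (n : ℕ) : ℝ := 1 / (n + 1)

lemma eps_pos (n : ℕ) : 0 < eps n := by
  have : (0:ℝ) < (n:ℝ) + 1 := by positivity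
  simpa [eps] using this

lemma eps_anti {m n : ℕ} (h : m ≤ n) : eps n ≤ eps m := by
  have h1 : (0:ℝ) < (m:ℝ) + 1 := by positivity
  have h2 : ((m:ℝ) + 1) ≤ (n:ℝ) + 1 := by exact_mod_cast Nat.succ_le_succ h
  exact one_div_le_one_div_of_le h1 h2

lemma eps_small {δ : ℝ} (hδ : 0 < δ) : ∃ N : ℕ, ∀ n, N ≤ n → eps n < δ := by
  obtain ⟨N, hN⟩ := exists_nat_one_div_lt hδ
  exact ⟨N, fun n hn => lt_of_le_of_lt (eps_anti hn) hN⟩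

/-- Characterization of closure in the product topology on `ℝ^X`. -/
lemma closure_char {F : Set (X → ℝ)} {h : X → ℝ} :
    h ∈ closure F ↔ ∀ (S : Finset X) (δ : ℝ), 0 < δ → ∃ f ∈ F, ∀ x ∈ S, |f x - h x| < δ := by
  constructor
  · intro hc S δ hδ
    have hopen : IsOpen {g : X → ℝ | ∀ x ∈ S, |g x - h x| < δ} := by
      have heq : {g : X → ℝ | ∀ x ∈ S, |g x - h x| < δ} =
          ⋂ x ∈ S, (fun g : X → ℝ => g x) ⁻¹' (Metric.ball (h x) δ) := by
        ext g
        simp [Real.dist_eq]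
      rw [heq]
      exact isOpen_biInter_finset fun x _ =>
        (continuous_apply x).isOpen_preimage _ Metric.isOpen_ball
    have hmem : h ∈ {g : X → ℝ | ∀ x ∈ S, |g x - h x| < δ} := by
      intro x _; simpa using hδ
    obtain ⟨f, hfO, hfF⟩ := (_root_.mem_closure_iff.mp hc) _ hopen hmem
    exact ⟨f, hfF, hfO⟩
  · intro H
    rw [_root_.mem_closure_iff]
    intro o ho hmem
    obtain ⟨I, u, hu, hsub⟩ := isOpen_pi_iff.mp ho h hmem
    have hball : ∀ x ∈ I, ∃ d, 0 < d ∧ Metric.ball (h x) d ⊆ u x := by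
      intro x hx
      obtain ⟨d, hd, hb⟩ := Metric.isOpen_iff.mp (hu x hx).1 (h x) (hu x hx).2
      exact ⟨d, hd, hb⟩
    choose! d hd hb using hball
    by_cases hI : I.Nonempty
    · set δ0 := I.inf' hI d with hδ0
      have hδ0pos : 0 < δ0 := by
        rw [hδ0, Finset.lt_inf'_iff]
        exact fun x hx => hd x hx
      obtain ⟨f, hfF, hf⟩ := H I δ0 hδ0pos
      refine ⟨f, ?_, hfF⟩
      apply hsub
      intro x hx
      apply hb x hx
      rw [Metric.mem_ball, Real.dist_eq]
      exact lt_of_lt_of_le (hf x hx) (Finset.inf'_le d hx)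
    · obtain ⟨f, hfF, _⟩ := H I 1 one_pos
      refine ⟨f, ?_, hfF⟩
      apply hsub
      intro x hx
      exact absurd ⟨x, hx⟩ hI

/-- A `0/1`-valued indicator-like function: `0` on `U`, `1` off `U`. -/
noncomputable def indic (U : Set X) : X → ℝ := fun x => Uᶜ.indicator (fun _ => (1:ℝ)) x

lemma indic_of_mem {U : Set X} {x : X} (h : x ∈ U) : indic U x = 0 :=
  Set.indicator_of_notMem (by simpa using h) _

lemma indic_of_notMem {U : Set X} {x : X} (h : x ∉ U) : indic U x = 1 :=
  Set.indicator_of_mem (by simpa using h) _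

lemma indic_nonneg (U : Set X) : (0 : X → ℝ) ≤ indic U := by
  intro x
  by_cases h : x ∈ U
  · rw [Pi.zero_apply, indic_of_mem h]
  · rw [Pi.zero_apply, indic_of_notMem h]; norm_num

lemma indic_injective : Function.Injective (indic (X := X)) := by
  intro U V h
  ext x
  constructor
  · intro hx
    by_contra hv
    have := congrFun h x
    rw [indic_of_mem hx, indic_of_notMem hv] at this
    norm_num at this
  · intro hx
    by_contra hv
    have := congrFun h x
    rw [indic_of_notMem hv, indic_of_mem hx] at this
    norm_num at this

lemma indic_eq_zero_iff {U : Set X} : indic U = 0 ↔ U = Set.univ := by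
  constructor
  · intro h
    ext x
    simp only [Set.mem_univ, iff_true]
    by_contra hx
    have := congrFun h x
    rw [indic_of_notMem hx] at this
    norm_num at this
  · rintro rfl
    ext x
    rw [indic_of_mem (Set.mem_univ x), Pi.zero_apply]

lemma indic_mem_USCb [TopologicalSpace X] {U : Set X} (hU : IsOpen U) : indic U ∈ USCb X := by
  constructor
  · intro a
    rcases le_or_gt a 0 with h0 | h0
    · have : {x | indic U x < a} = ∅ := by
        ext x
        simp only [Set.mem_setOf_eq, Set.mem_empty_iff_false, iff_false, not_lt]
        calc a ≤ 0 := h0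
          _ ≤ indic U x := indic_nonneg U x
      rw [this]; exact isOpen_empty
    · rcases le_or_gt a 1 with h1 | h1
      · have : {x | indic U x < a} = U := by
          ext x
          by_cases hx : x ∈ U
          · simp [indic_of_mem hx, h0, hx]
          · simp only [Set.mem_setOf_eq, indic_of_notMem hx, hx, iff_false, not_lt]
            exact h1
        rw [this]; exact hU
      · have : {x | indic U x < a} = Set.univ := by
          ext x
          simp only [Set.mem_setOf_eq, Set.mem_univ, iff_true]
          by_cases hx : x ∈ U
          · rw [indic_of_mem hx]; linarith
          · rw [indic_of_notMem hx]; exact h1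
        rw [this]; exact isOpen_univ
  · refine ⟨1, fun x => ?_⟩
    by_cases hx : x ∈ U
    · rw [indic_of_mem hx]; norm_num
    · rw [indic_of_notMem hx]; norm_num

lemma zero_mem_USCb [TopologicalSpace X] : (0 : X → ℝ) ∈ USCb X := by
  constructor
  · intro a
    rcases le_or_gt a 0 with h0 | h0
    · have : {x : X | (0 : X → ℝ) x < a} = ∅ := by
        ext x; simp only [Pi.zero_apply, Set.mem_setOf_eq, Set.mem_empty_iff_false, iff_false,
          not_lt]; exact h0
      rw [this]; exact isOpen_empty
    · have : {x : X | (0 : X → ℝ) x < a} = Set.univ := by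
        ext x; simp [h0]
      rw [this]; exact isOpen_univ
  · exact ⟨0, fun x => by simp⟩

/-- An infinite subfamily of a `γ`-cover is a `γ`-cover. -/
lemma gamma_subset {𝒰 𝒢 : Set (Set X)} (hsub : 𝒢 ⊆ 𝒰) (hinf : 𝒢.Infinite)
    (h : kindSets CoverKind.gamma 𝒰) : kindSets CoverKind.gamma 𝒢 := by
  obtain ⟨_, _, hγ⟩ := h
  refine ⟨?_, hinf, fun x => (hγ x).subset fun U hU => ⟨hsub hU.1, hU.2⟩⟩
  intro x
  have hfin : {U ∈ 𝒢 | x ∉ U}.Finite := (hγ x).subset fun U hU => ⟨hsub hU.1, hU.2⟩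
  obtain ⟨U, hU⟩ := (hinf.diff hfin).nonempty
  refine ⟨U, hU.1, ?_⟩
  by_contra hx
  exact hU.2 ⟨hU.1, hx⟩

/-- A `γ`-cover not containing `univ` is an `ω`-cover. -/
lemma gamma_to_omega {𝒰 : Set (Set X)} (h : kindSets CoverKind.gamma 𝒰)
    (huniv : Set.univ ∉ 𝒰) : kindSets CoverKind.omega 𝒰 := by
  obtain ⟨hcov, hinf, hγ⟩ := h
  refine ⟨hcov, huniv, ?_⟩
  intro F hF
  have hbad : {U ∈ 𝒰 | ∃ x ∈ F, x ∉ U}.Finite := by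
    have : {U ∈ 𝒰 | ∃ x ∈ F, x ∉ U} ⊆ ⋃ x ∈ F, {U ∈ 𝒰 | x ∉ U} := by
      rintro U ⟨hU, x, hx, hxU⟩
      exact Set.mem_biUnion hx ⟨hU, hxU⟩
    exact ((hF.biUnion fun x _ => hγ x).subset this)
  obtain ⟨U, hU⟩ := (hinf.diff hbad).nonempty
  refine ⟨U, hU.1, fun x hx => ?_⟩
  by_contra hxU
  exact hU.2 ⟨hU.1, x, hx, hxU⟩

/-- Every `γ`-cover admits an injectively enumerated countable `γ`-subcover. -/
lemma gamma_countable {𝒰 : Set (Set X)} (h : kindSets CoverKind.gamma 𝒰) :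
    ∃ g : ℕ → Set X, Function.Injective g ∧ (∀ i, g i ∈ 𝒰) ∧
      kindSets CoverKind.gamma (Set.range g) := by
  have hinf := h.2.1
  let e := hinf.natEmbedding
  refine ⟨fun i => (e i : Set X), fun i j hij => e.injective (Subtype.ext hij),
    fun i => (e i).2, ?_⟩
  refine gamma_subset ?_ ?_ h
  · rintro U ⟨i, rfl⟩; exact (e i).2
  · exact Set.infinite_range_of_injective fun i j hij => e.injective (Subtype.ext hij)

/-- Greedy injective choice from a sequence of infinite sets. -/
noncomputable def greedy {β : Type*} (A : ℕ → Set β) (hA : ∀ n, (A n).Infinite) : ℕ → β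
  | n => (((hA n).diff (Set.finite_range fun i : Fin n => greedy A hA i)).nonempty).some
  decreasing_by all_goals exact i.isLt

lemma greedy_spec {β : Type*} (A : ℕ → Set β) (hA : ∀ n, (A n).Infinite) (n : ℕ) :
    greedy A hA n ∈ A n \ Set.range (fun i : Fin n => greedy A hA i) := by
  rw [greedy]
  exact (((hA n).diff (Set.finite_range fun i : Fin n => greedy A hA i)).nonempty).some_mem

lemma greedy_injective {β : Type*} (A : ℕ → Set β) (hA : ∀ n, (A n).Infinite) :
    Function.Injective (greedy A hA) := by
  intro m n hmn
  by_contra hne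
  wlog h : m < n generalizing m n
  · exact this hmn.symm (Ne.symm hne) ((Ne.lt_or_gt hne).resolve_left h)
  exact (greedy_spec A hA n).2 ⟨⟨m, h⟩, hmn⟩

lemma greedy_mem {β : Type*} (A : ℕ → Set β) (hA : ∀ n, (A n).Infinite) (n : ℕ) :
    greedy A hA n ∈ A n := (greedy_spec A hA n).1

/-- If all fibers of `φ` over an infinite set are finite, the image is infinite. -/
lemma infinite_image_of_fibers_finite {α β : Type*} {I : Set α} (hI : I.Infinite) {φ : α → β}
    (hfib : ∀ b, {a ∈ I | φ a = b}.Finite) : (φ '' I).Infinite := by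
  intro hfin
  apply hI
  have : I ⊆ ⋃ b ∈ φ '' I, {a ∈ I | φ a = b} := by
    intro a ha
    exact Set.mem_biUnion ⟨a, ha, rfl⟩ ⟨ha, rfl⟩
  exact (hfin.biUnion fun b _ => hfib b).subset this

lemma unbounded_of_infinite {I : Set ℕ} (hI : I.Infinite) (N : ℕ) : ∃ n ∈ I, N ≤ n := by
  by_contra h
  push_neg at h
  exact hI ((Set.finite_Iio N).subset fun n hn => h n hn)

end Aux0

/-- For Φ ∈ {Ω, Γ}, Ψ ∈ {𝒪, Ω, Γ} with ⟨Φ,Ψ⟩ ≠ ⟨Ω,𝒪⟩ (or, alternatively,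
with X possessing property (ε)), and X an infinite Hausdorff space:
X is an S₁(Φ,Ψ)-space iff for every h ∈ USC*_p(X) the family USC*_p(X) satisfies
the selection principle S₁(Φ_h,Ψ_h). -/
theorem statement0 {X : Type*} [TopologicalSpace X] [T2Space X] [Infinite X]
    (Φ Ψ : CoverKind) (hΦ : Φ = CoverKind.omega ∨ Φ = CoverKind.gamma)
    (hpair : ¬(Φ = CoverKind.omega ∧ Ψ = CoverKind.o) ∨ PropEps X) :
    S1 (OpenKindCovers X Φ) (OpenKindCovers X Ψ) ↔
      ∀ h ∈ USCb X, S1 (PhiH Φ h (USCb X)) (PhiH Ψ h (USCb X)) := by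
  classical
  constructor
  · -- forward direction
    intro hS1 h hh u hu
    -- basic facts
    have hUSC : ∀ n, ∀ f ∈ u n, f ∈ USCb X := fun n f hf => (hu n).1 hf
    have hge : ∀ n, ∀ f ∈ u n, h ≤ f := fun n f hf => ((hu n).2.2 f hf).1
    have hsubUSC : ∀ n, ∀ f ∈ u n, f - h ∈ USCb X := fun n f hf => ((hu n).2.2 f hf).2
    have habs : ∀ n, ∀ f ∈ u n, ∀ x : X, |f x - h x| = f x - h x := fun n f hf x =>
      abs_of_nonneg (sub_nonneg.mpr (hge n f hf x))
    -- the families minus h are infinite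
    have hInf : ∀ n, (u n \ {h}).Infinite := by
      rcases hΦ with rfl | rfl
      · intro n
        have hom : PropOmega h (u n) := (hu n).2.1
        have hinf : (u n).Infinite := by
          intro hfin
          exact hom.1 (hfin.isClosed.closure_eq ▸ hom.2)
        exact hinf.diff (Set.finite_singleton h)
      · intro n
        exact ((hu n).2.1).1.diff (Set.finite_singleton h)
    -- approximation on finite sets
    have hclose2 : ∀ n (S : Finset X) (δ : ℝ), 0 < δ →
        ∃ f ∈ u n \ {h}, ∀ x ∈ S, f x - h x < δ := by
      rcases hΦ with rfl | rfl
      · intro n S δ hδ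
        have hom : PropOmega h (u n) := (hu n).2.1
        obtain ⟨f, hf, hfS⟩ := closure_char.mp hom.2 S δ hδ
        refine ⟨f, ⟨hf, fun hfh => hom.1 (by rwa [Set.mem_singleton_iff.mp hfh] at hf)⟩,
          fun x hx => lt_of_le_of_lt (le_abs_self _) (hfS x hx)⟩
      · intro n S δ hδ
        have hγ : PropGamma h (u n) := (hu n).2.1
        have hbad : {f ∈ u n | ∃ x ∈ S, δ ≤ |f x - h x|}.Finite := by
          have hsub : {f ∈ u n | ∃ x ∈ S, δ ≤ |f x - h x|} ⊆
              ⋃ x ∈ (S : Set X), {f ∈ u n | δ ≤ |f x - h x|} := by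
            rintro f ⟨hf, x, hx, hval⟩
            exact Set.mem_biUnion hx ⟨hf, hval⟩
          exact (S.finite_toSet.biUnion fun x _ => hγ.2 δ hδ x).subset hsub
        obtain ⟨f, hf⟩ := ((hInf n).diff hbad).nonempty
        refine ⟨f, hf.1, fun x hx => ?_⟩
        have hnot : ¬ δ ≤ |f x - h x| := fun hc => hf.2 ⟨hf.1.1, x, hx, hc⟩
        exact lt_of_le_of_lt (le_abs_self _) (not_le.mp hnot)
    -- the covers and the set of indices with a uniform witness
    set Us : ℕ → Set (Set X) := fun n => (fun f => {x | f x - h x < eps n}) '' (u n \ {h})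
      with hUsdef
    set A : Set ℕ := {n | ∃ f ∈ u n \ {h}, ∀ x, f x - h x < eps n} with hAdef
    have hUopen : ∀ n, ∀ V ∈ Us n, IsOpen V := by
      rintro n V ⟨f, hf, rfl⟩
      have hop := (hsubUSC n f hf.1).1 (eps n)
      simp only [Pi.sub_apply] at hop
      exact hop
    have hwitex : ∀ n, n ∈ A → ∃ f, (f ∈ u n \ {h}) ∧ ∀ x, f x - h x < eps n := by
      intro n hn
      obtain ⟨f, h1, h2⟩ := hn
      exact ⟨f, h1, h2⟩
    choose wit hwit1 hwit2 using hwitex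
    have harbex : ∀ n, ∃ f, f ∈ u n \ {h} := fun n => (hInf n).nonempty
    choose arb harb1 using harbex
    -- for n off A the cover is a genuine Φ-cover
    have hcovB : ∀ n, n ∉ A → Us n ∈ OpenKindCovers X Φ := by
      rcases hΦ with rfl | rfl
      · intro n hn
        refine ⟨hUopen n, ?_, ?_, ?_⟩
        · intro x
          obtain ⟨f, hf, hfx⟩ := hclose2 n {x} (eps n) (eps_pos n)
          exact ⟨_, ⟨f, hf, rfl⟩, hfx x (Finset.mem_singleton_self x)⟩
        · rintro ⟨f, hf, hfu⟩
          exact hn ⟨f, hf, fun x => Set.eq_univ_iff_forall.mp hfu x⟩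
        · intro S hS
          obtain ⟨f, hf, hfS⟩ := hclose2 n hS.toFinset (eps n) (eps_pos n)
          exact ⟨_, ⟨f, hf, rfl⟩, fun x hx => hfS x (hS.mem_toFinset.mpr hx)⟩
      · intro n hn
        have hγ : PropGamma h (u n) := (hu n).2.1
        refine ⟨hUopen n, ?_, ?_, ?_⟩
        · intro x
          obtain ⟨f, hf, hfx⟩ := hclose2 n {x} (eps n) (eps_pos n)
          exact ⟨_, ⟨f, hf, rfl⟩, hfx x (Finset.mem_singleton_self x)⟩
        · intro hfin
          have hnofib : ¬ ∀ V, {f ∈ u n \ {h} | {x | f x - h x < eps n} = V}.Finite :=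
            fun hfib => infinite_image_of_fibers_finite (hInf n) hfib hfin
          push_neg at hnofib
          obtain ⟨V, hV⟩ := hnofib
          have hVinf : {f ∈ u n \ {h} | {x | f x - h x < eps n} = V}.Infinite := hV
          have hVuniv : V = Set.univ := by
            rw [Set.eq_univ_iff_forall]
            intro x
            have hbadx : {f ∈ u n | eps n ≤ |f x - h x|}.Finite := hγ.2 (eps n) (eps_pos n) x
            obtain ⟨f, hf⟩ := (hVinf.diff hbadx).nonempty
            have hnotbad : ¬ (f ∈ u n ∧ eps n ≤ |f x - h x|) := hf.2
            push_neg at hnotbad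
            have hflt : f x - h x < eps n :=
              lt_of_le_of_lt (le_abs_self _) (hnotbad hf.1.1.1)
            rw [← hf.1.2]
            exact hflt
          obtain ⟨f₀, hf₀⟩ := hVinf.nonempty
          refine hn ⟨f₀, hf₀.1, fun x => ?_⟩
          have hV0 := hf₀.2
          rw [hVuniv] at hV0
          exact Set.eq_univ_iff_forall.mp hV0 x
        · intro x
          have hbadx : {f ∈ u n | eps n ≤ |f x - h x|}.Finite := hγ.2 (eps n) (eps_pos n) x
          have hsub : {V ∈ Us n | x ∉ V} ⊆
              (fun f => {y | f y - h y < eps n}) '' {f ∈ u n | eps n ≤ |f x - h x|} := by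
            rintro V ⟨⟨f, hf, rfl⟩, hxV⟩
            refine ⟨f, ⟨hf.1, ?_⟩, rfl⟩
            rw [habs n f hf.1 x]
            exact not_lt.mp hxV
          exact (hbadx.image _).subset hsub
    -- wrapping a selection into the final form
    have hfinal : ∀ sel : ℕ → (X → ℝ), (∀ n, sel n ∈ u n \ {h}) →
        kindProp Ψ h (Set.range sel) →
        ∃ sel' : ℕ → (X → ℝ), (∀ n, sel' n ∈ u n) ∧ Set.range sel' ∈ PhiH Ψ h (USCb X) := by
      intro sel h1 h2
      refine ⟨sel, fun n => (h1 n).1, ⟨?_, h2, ?_⟩⟩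
      · rintro f ⟨n, rfl⟩
        exact hUSC n _ (h1 n).1
      · rintro f ⟨n, rfl⟩
        exact ⟨hge n _ (h1 n).1, hsubUSC n _ (h1 n).1⟩
    have mkO : ∀ sel : ℕ → (X → ℝ), (∀ n, sel n ∈ u n \ {h}) →
        (∀ x : X, ∀ δ : ℝ, 0 < δ → ∃ n, sel n x - h x < δ) → PropO h (Set.range sel) := by
      intro sel h1 h2 x
      rw [Metric.mem_closure_iff]
      intro δ hδ
      obtain ⟨n, hn⟩ := h2 x δ hδ
      refine ⟨sel n x, ⟨sel n, ⟨n, rfl⟩, rfl⟩, ?_⟩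
      rw [Real.dist_eq, abs_sub_comm, habs n _ (h1 n).1 x]
      exact hn
    cases Ψ with
    | o =>
      by_cases hAf : A.Finite
      · -- ♦ CASE 4 for 𝒪: apply S1 on infinitely many pieces of the complement of A
        have hBinf : (Aᶜ : Set ℕ).Infinite := hAf.infinite_compl
        haveI : Infinite (Aᶜ : Set ℕ) := hBinf.to_subtype
        set e := Nat.Subtype.orderIsoOfNat (Aᶜ : Set ℕ) with hedef
        set nk : ℕ → ℕ := fun k => (e k : ℕ) with hnkdef
        have hnkB : ∀ k, nk k ∈ Aᶜ := fun k => (e k).2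
        have hnkmono : ∀ k, k ≤ nk k :=
          fun k => ((Subtype.strictMono_coe _).comp e.strictMono).le_apply
        obtain ⟨V, hV1, hV2⟩ :
            ∃ V : ℕ → ℕ → Set X, (∀ j i, V j i ∈ Us (nk (Nat.pair j i))) ∧
              ∀ j, Set.range (V j) ∈ OpenKindCovers X CoverKind.o := by
          have hex : ∀ j : ℕ, ∃ Vj : ℕ → Set X, (∀ i, Vj i ∈ Us (nk (Nat.pair j i))) ∧
              Set.range Vj ∈ OpenKindCovers X CoverKind.o :=
            fun j => hS1 (fun i => Us (nk (Nat.pair j i)))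
              (fun i => hcovB _ (hnkB (Nat.pair j i)))
          choose V h1 h2 using hex
          exact ⟨V, h1, h2⟩
        have hdec : ∀ j i, ∃ f, (f ∈ u (nk (Nat.pair j i)) \ {h}) ∧
            {x | f x - h x < eps (nk (Nat.pair j i))} = V j i := by
          intro j i
          obtain ⟨f, hf, hfV⟩ := hV1 j i
          exact ⟨f, hf, hfV⟩
        choose fd hfd1 hfd2 using hdec
        set sel : ℕ → (X → ℝ) := fun n => if hn : n ∈ A then arb n else
            fd (Nat.unpair ((e.symm ⟨n, hn⟩ : ℕ))).1 (Nat.unpair ((e.symm ⟨n, hn⟩ : ℕ))).2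
          with hseldef
        have hsymmk : ∀ (t : ℕ) (hc : nk t ∈ Aᶜ), e.symm ⟨nk t, hc⟩ = t := by
          intro t hc
          have hee : (⟨nk t, hc⟩ : (Aᶜ : Set ℕ)) = e t := rfl
          rw [hee, OrderIso.symm_apply_apply]
        have hselB : ∀ j i, sel (nk (Nat.pair j i)) = fd j i := by
          intro j i
          have hc : nk (Nat.pair j i) ∈ Aᶜ := hnkB _
          simp only [hseldef, dif_neg hc]
          rw [hsymmk (Nat.pair j i) hc]
          simp [Nat.unpair_pair]
        have hsel1 : ∀ n, sel n ∈ u n \ {h} := by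
          intro n
          by_cases hn : n ∈ A
          · simp only [hseldef, dif_pos hn]
            exact harb1 n
          · simp only [hseldef, dif_neg hn]
            have hc : n ∈ Aᶜ := hn
            have hmem := hfd1 (Nat.unpair ((e.symm ⟨n, hc⟩ : ℕ))).1
              (Nat.unpair ((e.symm ⟨n, hc⟩ : ℕ))).2
            have hnn : nk (Nat.pair (Nat.unpair ((e.symm ⟨n, hc⟩ : ℕ))).1
                (Nat.unpair ((e.symm ⟨n, hc⟩ : ℕ))).2) = n := by
              rw [Nat.pair_unpair]
              simp [hnkdef]
            rwa [hnn] at hmem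
        apply hfinal sel hsel1
        apply mkO sel hsel1
        intro x δ hδ
        obtain ⟨N, hN⟩ := eps_small hδ
        have hcov : IsCover (Set.range (V N)) := (hV2 N).2
        obtain ⟨W, ⟨i, rfl⟩, hxW⟩ := hcov x
        refine ⟨nk (Nat.pair N i), ?_⟩
        rw [hselB N i]
        have hxW' : x ∈ {y | fd N i y - h y < eps (nk (Nat.pair N i))} := by
          rw [hfd2 N i]; exact hxW
        exact lt_trans hxW' (hN _ (le_trans (Nat.left_le_pair N i) (hnkmono _)))
      · -- ♦ CASE 1 for 𝒪: A is infinite, use the uniform witnesses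
        have hAinf : A.Infinite := hAf
        set sel : ℕ → (X → ℝ) := fun n => if hn : n ∈ A then wit n hn else arb n with hseldef
        have hsel1 : ∀ n, sel n ∈ u n \ {h} := by
          intro n
          by_cases hn : n ∈ A
          · simp only [hseldef, dif_pos hn]; exact hwit1 n hn
          · simp only [hseldef, dif_neg hn]; exact harb1 n
        apply hfinal sel hsel1
        apply mkO sel hsel1
        intro x δ hδ
        obtain ⟨N, hN⟩ := eps_small hδ
        obtain ⟨n, hn, hNn⟩ := unbounded_of_infinite hAinf N
        refine ⟨n, ?_⟩
        have : sel n = wit n hn := dif_pos hn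
        rw [this]
        exact lt_trans (hwit2 n hn x) (hN n hNn)
    | omega =>
      by_cases hAf : A.Finite
      · -- ♦ CASE 4 for Ω
        have hBinf : (Aᶜ : Set ℕ).Infinite := hAf.infinite_compl
        haveI : Infinite (Aᶜ : Set ℕ) := hBinf.to_subtype
        set e := Nat.Subtype.orderIsoOfNat (Aᶜ : Set ℕ) with hedef
        set nk : ℕ → ℕ := fun k => (e k : ℕ) with hnkdef
        have hnkB : ∀ k, nk k ∈ Aᶜ := fun k => (e k).2
        have hnkmono : ∀ k, k ≤ nk k :=
          fun k => ((Subtype.strictMono_coe _).comp e.strictMono).le_apply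
        obtain ⟨V, hV1, hV2⟩ :
            ∃ V : ℕ → ℕ → Set X, (∀ j i, V j i ∈ Us (nk (Nat.pair j i))) ∧
              ∀ j, Set.range (V j) ∈ OpenKindCovers X CoverKind.omega := by
          have hex : ∀ j : ℕ, ∃ Vj : ℕ → Set X, (∀ i, Vj i ∈ Us (nk (Nat.pair j i))) ∧
              Set.range Vj ∈ OpenKindCovers X CoverKind.omega :=
            fun j => hS1 (fun i => Us (nk (Nat.pair j i)))
              (fun i => hcovB _ (hnkB (Nat.pair j i)))
          choose V h1 h2 using hex
          exact ⟨V, h1, h2⟩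
        have hdec : ∀ j i, ∃ f, (f ∈ u (nk (Nat.pair j i)) \ {h}) ∧
            {x | f x - h x < eps (nk (Nat.pair j i))} = V j i := by
          intro j i
          obtain ⟨f, hf, hfV⟩ := hV1 j i
          exact ⟨f, hf, hfV⟩
        choose fd hfd1 hfd2 using hdec
        set sel : ℕ → (X → ℝ) := fun n => if hn : n ∈ A then arb n else
            fd (Nat.unpair ((e.symm ⟨n, hn⟩ : ℕ))).1 (Nat.unpair ((e.symm ⟨n, hn⟩ : ℕ))).2
          with hseldef
        have hsymmk : ∀ (t : ℕ) (hc : nk t ∈ Aᶜ), e.symm ⟨nk t, hc⟩ = t := by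
          intro t hc
          have hee : (⟨nk t, hc⟩ : (Aᶜ : Set ℕ)) = e t := rfl
          rw [hee, OrderIso.symm_apply_apply]
        have hselB : ∀ j i, sel (nk (Nat.pair j i)) = fd j i := by
          intro j i
          have hc : nk (Nat.pair j i) ∈ Aᶜ := hnkB _
          simp only [hseldef, dif_neg hc]
          rw [hsymmk (Nat.pair j i) hc]
          simp [Nat.unpair_pair]
        have hsel1 : ∀ n, sel n ∈ u n \ {h} := by
          intro n
          by_cases hn : n ∈ A
          · simp only [hseldef, dif_pos hn]
            exact harb1 n
          · simp only [hseldef, dif_neg hn]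
            have hc : n ∈ Aᶜ := hn
            have hmem := hfd1 (Nat.unpair ((e.symm ⟨n, hc⟩ : ℕ))).1
              (Nat.unpair ((e.symm ⟨n, hc⟩ : ℕ))).2
            have hnn : nk (Nat.pair (Nat.unpair ((e.symm ⟨n, hc⟩ : ℕ))).1
                (Nat.unpair ((e.symm ⟨n, hc⟩ : ℕ))).2) = n := by
              rw [Nat.pair_unpair]
              simp [hnkdef]
            rwa [hnn] at hmem
        apply hfinal sel hsel1
        constructor
        · rintro ⟨n, hn⟩
          exact (hsel1 n).2 (Set.mem_singleton_iff.mpr hn)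
        · rw [closure_char]
          intro S δ hδ
          obtain ⟨N, hN⟩ := eps_small hδ
          obtain ⟨W, ⟨i, rfl⟩, hSW⟩ := (hV2 N).2.2.2 ↑S S.finite_toSet
          refine ⟨sel (nk (Nat.pair N i)), ⟨_, rfl⟩, fun x hx => ?_⟩
          rw [habs _ _ (hsel1 _).1 x, hselB N i]
          have hxW : x ∈ {y | fd N i y - h y < eps (nk (Nat.pair N i))} := by
            rw [hfd2 N i]; exact hSW hx
          exact lt_trans hxW (hN _ (le_trans (Nat.left_le_pair N i) (hnkmono _)))
      · -- ♦ CASE 1 for Ω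
        have hAinf : A.Infinite := hAf
        set sel : ℕ → (X → ℝ) := fun n => if hn : n ∈ A then wit n hn else arb n with hseldef
        have hsel1 : ∀ n, sel n ∈ u n \ {h} := by
          intro n
          by_cases hn : n ∈ A
          · simp only [hseldef, dif_pos hn]; exact hwit1 n hn
          · simp only [hseldef, dif_neg hn]; exact harb1 n
        apply hfinal sel hsel1
        constructor
        · rintro ⟨n, hn⟩
          exact (hsel1 n).2 (Set.mem_singleton_iff.mpr hn)
        · rw [closure_char]
          intro S δ hδ
          obtain ⟨N, hN⟩ := eps_small hδ
          obtain ⟨n, hn, hNn⟩ := unbounded_of_infinite hAinf N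
          refine ⟨sel n, ⟨n, rfl⟩, fun x _ => ?_⟩
          rw [habs n _ (hsel1 n).1 x]
          have hw : sel n = wit n hn := dif_pos hn
          rw [hw]
          exact lt_trans (hwit2 n hn x) (hN n hNn)
    | gamma =>
      by_cases hBf : (Aᶜ : Set ℕ).Finite
      · -- ♦ CASE 2: the complement of A is finite
        have hAinf : A.Infinite := by
          have := hBf.infinite_compl
          rwa [compl_compl] at this
        set sel : ℕ → (X → ℝ) := fun n => if hn : n ∈ A then wit n hn else arb n with hseldef
        have hsel1 : ∀ n, sel n ∈ u n \ {h} := by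
          intro n
          by_cases hn : n ∈ A
          · simp only [hseldef, dif_pos hn]; exact hwit1 n hn
          · simp only [hseldef, dif_neg hn]; exact harb1 n
        have hselA : ∀ n (hn : n ∈ A), sel n = wit n hn := fun n hn => dif_pos hn
        apply hfinal sel hsel1
        constructor
        · -- range is infinite
          refine ((infinite_image_of_fibers_finite hAinf ?_).mono
            (Set.image_subset_range sel A))
          intro g
          by_contra hfib
          have hfibinf : {n ∈ A | sel n = g}.Infinite := hfib
          obtain ⟨n₀, hn₀⟩ := hfibinf.nonempty
          have hgu : g ∈ u n₀ \ {h} := hn₀.2 ▸ hsel1 n₀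
          apply hgu.2
          rw [Set.mem_singleton_iff]
          refine le_antisymm ?_ (hge n₀ g hgu.1)
          intro x
          by_contra hc
          push_neg at hc
          obtain ⟨N, hN⟩ := eps_small (sub_pos.mpr hc)
          obtain ⟨n, hn, hNn⟩ := unbounded_of_infinite hfibinf N
          have hlt : g x - h x < eps n := by
            rw [← hn.2, hselA n hn.1]
            exact hwit2 n hn.1 x
          have := lt_trans hlt (hN n hNn)
          linarith
        · intro δ hδ x
          obtain ⟨N, hN⟩ := eps_small hδ
          have hsub : {f ∈ Set.range sel | δ ≤ |f x - h x|} ⊆ sel '' (Set.Iio N ∪ Aᶜ) := by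
            rintro f ⟨⟨n, rfl⟩, hval⟩
            rw [habs n _ (hsel1 n).1 x] at hval
            by_cases hn : n ∈ A
            · rcases lt_or_ge n N with hcN | hcN
              · exact ⟨n, Or.inl hcN, rfl⟩
              · exfalso
                have hlt : sel n x - h x < eps n := by
                  rw [hselA n hn]; exact hwit2 n hn x
                exact absurd hval (not_le.mpr (lt_trans hlt (hN n hcN)))
            · exact ⟨n, Or.inr hn, rfl⟩
          exact (((Set.finite_Iio N).union hBf).image sel).subset hsub
      · -- ♦ CASE 3: the complement of A is infinite
        have hBinf : (Aᶜ : Set ℕ).Infinite := hBf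
        haveI : Infinite (Aᶜ : Set ℕ) := hBinf.to_subtype
        set e := Nat.Subtype.orderIsoOfNat (Aᶜ : Set ℕ) with hedef
        set nk : ℕ → ℕ := fun k => (e k : ℕ) with hnkdef
        have hnkB : ∀ k, nk k ∈ Aᶜ := fun k => (e k).2
        have hnkinj : Function.Injective nk := fun i j hij => by
          have := e.injective (Subtype.ext hij)
          exact this
        have hnksymm : ∀ (n : ℕ) (hc : n ∈ Aᶜ), nk (e.symm ⟨n, hc⟩) = n :=
          fun n hc => congrArg Subtype.val (e.apply_symm_apply ⟨n, hc⟩)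
        -- countable γ-subcovers of the Us-covers
        have hsubcov : ∀ k, ∃ g : ℕ → Set X, Function.Injective g ∧
            (∀ i, g i ∈ Us (nk k)) ∧ kindSets CoverKind.gamma (Set.range g) := by
          rcases hΦ with rfl | rfl
          · intro k
            obtain ⟨v, hv1, hv2⟩ := hS1 (fun _ : ℕ => Us (nk k))
              (fun _ => hcovB (nk k) (hnkB k))
            obtain ⟨g, hg1, hg2, hg3⟩ := gamma_countable hv2.2
            refine ⟨g, hg1, fun i => ?_, hg3⟩
            obtain ⟨m, hm⟩ := hg2 i
            exact hm ▸ hv1 m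
          · intro k
            exact gamma_countable (hcovB (nk k) (hnkB k)).2
        choose g hg1 hg2 hg3 using hsubcov
        -- disjointify
        have hDinf : ∀ t : ℕ, (Set.range (g (Nat.unpair t).1)).Infinite :=
          fun t => Set.infinite_range_of_injective (hg1 _)
        set p : ℕ → Set X := greedy _ hDinf with hpdef
        have hpinj : Function.Injective p := greedy_injective _ hDinf
        have hpmem : ∀ t, p t ∈ Set.range (g (Nat.unpair t).1) := greedy_mem _ hDinf
        set V : ℕ → Set (Set X) :=
          fun k => (Set.range fun i => p (Nat.pair k i)) \ {Set.univ} with hVdef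
        have hVsubg : ∀ k, V k ⊆ Set.range (g k) := by
          rintro k W ⟨⟨i, rfl⟩, -⟩
          have hmem := hpmem (Nat.pair k i)
          rwa [Nat.unpair_pair] at hmem
        have hVsubU : ∀ k, V k ⊆ Us (nk k) := by
          intro k W hW
          obtain ⟨i, hi⟩ := hVsubg k hW
          exact hi ▸ hg2 k i
        have hVdisj : ∀ k j, k ≠ j → ∀ W, W ∈ V k → W ∉ V j := by
          rintro k j hkj W ⟨⟨i, rfl⟩, -⟩ ⟨⟨i', hi'⟩, -⟩
          have hp := hpinj hi'
          have := congrArg (fun t => (Nat.unpair t).1) hp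
          simp only [Nat.unpair_pair] at this
          exact hkj this.symm
        have hVgamma : ∀ k, kindSets CoverKind.gamma (V k) := by
          intro k
          refine gamma_subset (hVsubg k) ?_ (hg3 k)
          have hri : (Set.range fun i => p (Nat.pair k i)).Infinite :=
            Set.infinite_range_of_injective fun i j hij => by
              have := congrArg (fun t => (Nat.unpair t).2) (hpinj hij)
              simpa [Nat.unpair_pair] using this
          exact hri.diff (Set.finite_singleton _)
        have hVcov : ∀ k, V k ∈ OpenKindCovers X Φ := by
          have hop : ∀ k, ∀ W ∈ V k, IsOpen W := fun k W hW => hUopen (nk k) W (hVsubU k hW)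
          rcases hΦ with rfl | rfl
          · exact fun k => ⟨hop k, gamma_to_omega (hVgamma k) (fun hc => hc.2 rfl)⟩
          · exact fun k => ⟨hop k, hVgamma k⟩
        obtain ⟨W, hW1, hW2⟩ := hS1 V hVcov
        have hWinj : Function.Injective W := by
          intro k j hkj
          by_contra hne
          exact hVdisj k j hne (W k) (hW1 k) (hkj ▸ hW1 j)
        have hWfin : ∀ x : X, {k | x ∉ W k}.Finite := by
          intro x
          have h1 : {V' ∈ Set.range W | x ∉ V'}.Finite := hW2.2.2.2 x
          have hsub : {k | x ∉ W k} ⊆ W ⁻¹' {V' ∈ Set.range W | x ∉ V'} :=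
            fun k hk => ⟨⟨k, rfl⟩, hk⟩
          exact (h1.preimage hWinj.injOn).subset hsub
        -- decode
        have hdec : ∀ k, ∃ f, (f ∈ u (nk k) \ {h}) ∧
            {x | f x - h x < eps (nk k)} = W k := by
          intro k
          obtain ⟨f, hf, hfW⟩ := hVsubU k (hW1 k)
          exact ⟨f, hf, hfW⟩
        choose fd hfd1 hfd2 using hdec
        set sel : ℕ → (X → ℝ) := fun n => if hn : n ∈ A then wit n hn else
            fd (e.symm ⟨n, hn⟩) with hseldef
        have hselA : ∀ n (hn : n ∈ A), sel n = wit n hn := fun n hn => dif_pos hn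
        have hsymmk : ∀ (t : ℕ) (hc : nk t ∈ Aᶜ), e.symm ⟨nk t, hc⟩ = t := by
          intro t hc
          have hee : (⟨nk t, hc⟩ : (Aᶜ : Set ℕ)) = e t := rfl
          rw [hee, OrderIso.symm_apply_apply]
        have hselB : ∀ k, sel (nk k) = fd k := by
          intro k
          have hc : nk k ∈ Aᶜ := hnkB k
          simp only [hseldef, dif_neg hc]
          rw [hsymmk k hc]
        have hsel1 : ∀ n, sel n ∈ u n \ {h} := by
          intro n
          by_cases hn : n ∈ A
          · simp only [hseldef, dif_pos hn]; exact hwit1 n hn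
          · simp only [hseldef, dif_neg hn]
            have hc : n ∈ Aᶜ := hn
            have hmem := hfd1 (e.symm ⟨n, hc⟩)
            rwa [hnksymm n hc] at hmem
        apply hfinal sel hsel1
        constructor
        · -- range is infinite
          refine ((infinite_image_of_fibers_finite hBinf ?_).mono
            (Set.image_subset_range sel (Aᶜ)))
          intro gf
          by_contra hfib
          have hfibinf : {n ∈ Aᶜ | sel n = gf}.Infinite := hfib
          obtain ⟨n₀, hn₀⟩ := hfibinf.nonempty
          have hgu : gf ∈ u n₀ \ {h} := hn₀.2 ▸ hsel1 n₀
          apply hgu.2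
          rw [Set.mem_singleton_iff]
          refine le_antisymm ?_ (hge n₀ gf hgu.1)
          intro x
          by_contra hc
          push_neg at hc
          obtain ⟨N, hN⟩ := eps_small (sub_pos.mpr hc)
          -- the k's with nk k in the fiber form an infinite set
          have hKinf : {k | nk k ∈ Aᶜ ∧ sel (nk k) = gf}.Infinite := by
            intro hKfin
            apply hfibinf
            have himg : {n ∈ Aᶜ | sel n = gf} ⊆ nk '' {k | nk k ∈ Aᶜ ∧ sel (nk k) = gf} := by
              intro n hn
              have hc' : n ∈ Aᶜ := hn.1
              refine ⟨e.symm ⟨n, hc'⟩, ?_, hnksymm n hc'⟩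
              show nk (e.symm ⟨n, hc'⟩) ∈ Aᶜ ∧ sel (nk (e.symm ⟨n, hc'⟩)) = gf
              rw [hnksymm n hc']
              exact hn
            exact (hKfin.image nk).subset himg
          have hbad1 : {k | x ∉ W k}.Finite := hWfin x
          have hbad2 : {k | nk k < N}.Finite := by
            have : {k | nk k < N} = nk ⁻¹' (Set.Iio N) := rfl
            rw [this]
            exact (Set.finite_Iio N).preimage hnkinj.injOn
          obtain ⟨k, hk⟩ := ((hKinf.diff hbad1).diff hbad2).nonempty
          have hxW : x ∈ W k := by
            by_contra hxw
            exact hk.1.2 hxw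
          have hNk : N ≤ nk k := not_lt.mp hk.2
          rw [← hfd2 k] at hxW
          have hlt : fd k x - h x < eps (nk k) := hxW
          rw [← hselB k, hk.1.1.2] at hlt
          have := lt_trans hlt (hN _ hNk)
          linarith
        · intro δ hδ x
          obtain ⟨N, hN⟩ := eps_small hδ
          have hsub : {f ∈ Set.range sel | δ ≤ |f x - h x|} ⊆
              sel '' (Set.Iio N ∪ nk '' {k | x ∉ W k}) := by
            rintro f ⟨⟨n, rfl⟩, hval⟩
            rw [habs n _ (hsel1 n).1 x] at hval
            by_cases hn : n ∈ A
            · rcases lt_or_ge n N with hcN | hcN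
              · exact ⟨n, Or.inl hcN, rfl⟩
              · exfalso
                have hlt : sel n x - h x < eps n := by
                  rw [hselA n hn]; exact hwit2 n hn x
                exact absurd hval (not_le.mpr (lt_trans hlt (hN n hcN)))
            · have hc : n ∈ Aᶜ := hn
              set k := e.symm ⟨n, hc⟩ with hkdef
              have hnkk : nk k = n := hnksymm n hc
              by_cases hxW : x ∈ W k
              · rcases lt_or_ge n N with hcN | hcN
                · exact ⟨n, Or.inl hcN, rfl⟩
                · exfalso
                  rw [← hfd2 k] at hxW
                  have hlt : fd k x - h x < eps (nk k) := hxW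
                  rw [← hselB k, hnkk] at hlt
                  exact absurd hval (not_le.mpr (lt_trans hlt (hN n hcN)))
              · exact ⟨n, Or.inr ⟨k, hxW, hnkk⟩, rfl⟩
          exact (((Set.finite_Iio N).union ((hWfin x).image nk)).image sel).subset hsub
  · -- backward direction
    intro hRHS u hu
    have h0 := zero_mem_USCb (X := X)
    set F : ℕ → Set (X → ℝ) := fun n => indic '' (u n) with hFdef
    have hF : ∀ n, F n ∈ PhiH Φ 0 (USCb X) := by
      intro n
      obtain ⟨hop, hks⟩ := hu n
      refine ⟨?_, ?_, ?_⟩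
      · rintro f ⟨U, hU, rfl⟩
        exact indic_mem_USCb (hop U hU)
      · rcases hΦ with rfl | rfl
        · obtain ⟨hcov, huniv, hfin⟩ := hks
          refine ⟨?_, ?_⟩
          · rintro ⟨U, hU, hind⟩
            rw [indic_eq_zero_iff.mp hind] at hU
            exact huniv hU
          · rw [closure_char]
            intro S δ hδ
            obtain ⟨U, hU, hSU⟩ := hfin ↑S S.finite_toSet
            refine ⟨indic U, ⟨U, hU, rfl⟩, fun x hx => ?_⟩
            rw [indic_of_mem (hSU hx), Pi.zero_apply, sub_zero, abs_zero]
            exact hδ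
        · obtain ⟨hcov, hinf, hγ⟩ := hks
          refine ⟨hinf.image indic_injective.injOn, ?_⟩
          intro ε hε x
          have hsub : {f ∈ F n | ε ≤ |f x - (0:X→ℝ) x|} ⊆ indic '' {U ∈ u n | x ∉ U} := by
            rintro f ⟨⟨U, hU, rfl⟩, hval⟩
            refine ⟨U, ⟨hU, fun hx => ?_⟩, rfl⟩
            rw [Pi.zero_apply, sub_zero, indic_of_mem hx, abs_zero] at hval
            linarith
          exact ((hγ x).image _).subset hsub
      · rintro f ⟨U, hU, rfl⟩
        refine ⟨indic_nonneg U, ?_⟩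
        rw [sub_zero]
        exact indic_mem_USCb (hop U hU)
    obtain ⟨fsel, hfsel1, hfsel2⟩ := hRHS 0 h0 F hF
    have hdec : ∀ n, ∃ U, U ∈ u n ∧ indic U = fsel n := fun n => by
      obtain ⟨U, hU, hind⟩ := hfsel1 n
      exact ⟨U, hU, hind⟩
    choose Un hUn1 hUn2 using hdec
    have hopen : ∀ V ∈ Set.range Un, IsOpen V := by
      rintro V ⟨n, rfl⟩; exact (hu n).1 _ (hUn1 n)
    have hK := hfsel2.2.1
    refine ⟨Un, hUn1, hopen, ?_⟩
    cases Ψ with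
    | o =>
      intro x
      have hx := hK x
      rw [Metric.mem_closure_iff] at hx
      obtain ⟨v, ⟨f, ⟨n, rfl⟩, rfl⟩, hv⟩ := hx 1 one_pos
      refine ⟨Un n, ⟨n, rfl⟩, ?_⟩
      by_contra hxU
      rw [← hUn2 n] at hv
      have hv' : dist ((0:X→ℝ) x) (indic (Un n) x) < 1 := hv
      rw [indic_of_notMem hxU, Pi.zero_apply, Real.dist_eq] at hv'
      norm_num at hv'
    | omega =>
      have habs : ∀ S : Set X, S.Finite → ∃ n, S ⊆ Un n := by
        intro S hS
        have hcl := hK.2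
        rw [closure_char] at hcl
        obtain ⟨f, ⟨n, rfl⟩, hf⟩ := hcl hS.toFinset 1 one_pos
        refine ⟨n, fun x hx => ?_⟩
        have hx' := hf x (hS.mem_toFinset.mpr hx)
        by_contra hxU
        rw [← hUn2 n, indic_of_notMem hxU, Pi.zero_apply, sub_zero] at hx'
        norm_num at hx'
      refine ⟨?_, ?_, ?_⟩
      · intro x
        obtain ⟨n, hn⟩ := habs {x} (Set.finite_singleton x)
        exact ⟨Un n, ⟨n, rfl⟩, hn rfl⟩
      · rintro ⟨n, hn⟩
        have : fsel n = 0 := by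
          rw [← hUn2 n, hn]
          exact indic_eq_zero_iff.mpr rfl
        exact hK.1 (this ▸ ⟨n, rfl⟩)
      · intro S hS
        obtain ⟨n, hn⟩ := habs S hS
        exact ⟨Un n, ⟨n, rfl⟩, hn⟩
    | gamma =>
      have hcomp : fsel = indic ∘ Un := funext fun n => (hUn2 n).symm
      have hrange : Set.range fsel = indic '' Set.range Un := by
        rw [hcomp, Set.range_comp]
      have hinf : (Set.range Un).Infinite := by
        intro hfin
        exact hK.1 (hrange ▸ hfin.image indic)
      refine ⟨?_, hinf, ?_⟩
      · intro x
        by_contra hnone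
        push_neg at hnone
        have hsub : Set.range fsel ⊆ {f ∈ Set.range fsel | 1 ≤ |f x - (0:X→ℝ) x|} := by
          rintro f ⟨n, rfl⟩
          refine ⟨⟨n, rfl⟩, ?_⟩
          rw [← hUn2 n, indic_of_notMem (hnone (Un n) ⟨n, rfl⟩), Pi.zero_apply, sub_zero,
            abs_one]
        exact hK.1 ((hK.2 1 one_pos x).subset hsub)
      · intro x
        have hsub : indic '' {V ∈ Set.range Un | x ∉ V} ⊆
            {f ∈ Set.range fsel | 1 ≤ |f x - (0:X→ℝ) x|} := by
          rintro f ⟨V, ⟨⟨n, rfl⟩, hxV⟩, rfl⟩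
          refine ⟨⟨n, (hUn2 n).symm⟩, ?_⟩
          rw [indic_of_notMem hxV, Pi.zero_apply, sub_zero, abs_one]
        exact Set.Finite.of_finite_image (((hK.2 1 one_pos x).subset hsub)) indic_injective.injOn

end Selectors
end

section
/- If X is a Tychonoff topological space possessing the OB-property, then USC*_p(X) is sequentially separable, i.e., USC*_p(X) has a countable subset S such that every member of USC*_p(X) is a pointwise limit of a sequence from S. -/
open Set Filter Topology

namespace Selectors

variable {X : Type*}

open TopologicalSpace

abbrev HilbC : Type := ℕ → unitInterval
noncomputable instance : MetricSpace HilbC := PiCountable.metricSpace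

/-- probability of at most one success -/
lemma aux_sum_mul_prod_le {ι : Type*} [DecidableEq ι] (s : Finset ι) (q : ι → ℝ)
    (hq : ∀ k, q k ∈ Icc (0:ℝ) 1) :
    ∑ k ∈ s, q k * ∏ k' ∈ s.erase k, (1 - q k') ≤ 1 := by
  classical
  induction s using Finset.induction_on with
  | empty => simp
  | @insert a s ha ih =>
    have hprod : ∀ (t : Finset ι), (0:ℝ) ≤ ∏ k' ∈ t, (1 - q k') := by
      intro t
      exact Finset.prod_nonneg fun k _ => by linarith [(hq k).2]
    have hprodle : ∀ (t : Finset ι), (∏ k' ∈ t, (1 - q k')) ≤ 1 := by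
      intro t
      exact Finset.prod_le_one (fun k _ => by linarith [(hq k).2]) (fun k _ => by linarith [(hq k).1])
    rw [Finset.sum_insert ha]
    have e1 : (insert a s).erase a = s := by
      rw [Finset.erase_insert ha]
    rw [e1]
    have e2 : ∀ k ∈ s, q k * ∏ k' ∈ (insert a s).erase k, (1 - q k')
        = (1 - q a) * (q k * ∏ k' ∈ s.erase k, (1 - q k')) := by
      intro k hk
      have hka : k ≠ a := by rintro rfl; exact ha hk
      have : (insert a s).erase k = insert a (s.erase k) :=
        Finset.erase_insert_of_ne hka.symm
      rw [this, Finset.prod_insert (by simp [ha, Finset.mem_erase])]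
      ring
    rw [Finset.sum_congr rfl e2, ← Finset.mul_sum]
    have h1 := hq a
    have h2 : ∑ k ∈ s, q k * ∏ k' ∈ s.erase k, (1 - q k') ≤ 1 := ih
    have h3 : (0:ℝ) ≤ ∑ k ∈ s, q k * ∏ k' ∈ s.erase k, (1 - q k') :=
      Finset.sum_nonneg fun k _ => mul_nonneg (hq k).1 (hprod _)
    have hb1 : q a * ∏ k' ∈ s, (1 - q k') ≤ q a :=
      calc q a * ∏ k' ∈ s, (1 - q k') ≤ q a * 1 :=
            mul_le_mul_of_nonneg_left (hprodle s) h1.1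
        _ = q a := mul_one _
    have hb2 : (1 - q a) * ∑ k ∈ s, q k * ∏ k' ∈ s.erase k, (1 - q k') ≤ (1 - q a) :=
      calc (1 - q a) * ∑ k ∈ s, q k * ∏ k' ∈ s.erase k, (1 - q k') ≤ (1 - q a) * 1 :=
            mul_le_mul_of_nonneg_left h2 (by linarith [h1.2])
        _ = 1 - q a := mul_one _
    linarith


/-- Lemma P: continuous approximants on the Hilbert cube for an ambient
stagewise-disjoint increasing system of closed sets. -/
lemma aux_lemP {ι : Type*} [Fintype ι] (E : ι → ℕ → Set HilbC) (w : ι → ℝ) (c : ℝ)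
    (hc : 0 ≤ c)
    (hcl : ∀ k m, IsClosed (E k m)) (hmono : ∀ k, Monotone (E k))
    (hdis : ∀ k k' m, k ≠ k' → Disjoint (E k m) (E k' m)) (hw : ∀ k, |w k| ≤ c) :
    ∃ φ : ℕ → C(HilbC, ℝ), (∀ m y, |(φ m) y| ≤ c) ∧
      ∀ y k m₀, y ∈ E k m₀ → ∀ m, m₀ ≤ m → (φ m) y = w k := by
  classical
  have hdisU : ∀ k m, Disjoint (⋃ k' ∈ (Finset.univ.erase k), E k' m) (E k m) := by
    intro k m
    rw [Set.disjoint_left]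
    rintro y hy hyk
    simp only [Set.mem_iUnion] at hy
    obtain ⟨k', hk', hy'⟩ := hy
    have hne : k' ≠ k := by simpa [Finset.mem_erase] using hk'
    exact (Set.disjoint_left.mp (hdis k' k m hne)) hy' hyk
  have hclU : ∀ k m, IsClosed (⋃ k' ∈ (Finset.univ.erase k), E k' m) := by
    intro k m
    exact (Finset.univ.erase k).finite_toSet.isClosed_biUnion fun k' _ => hcl k' m
  -- Urysohn functions
  have hq : ∀ k m, ∃ q : C(HilbC, ℝ),
      EqOn q 0 (⋃ k' ∈ (Finset.univ.erase k), E k' m) ∧ EqOn q 1 (E k m) ∧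
      ∀ y, q y ∈ Icc (0:ℝ) 1 :=
    fun k m => exists_continuous_zero_one_of_isClosed (hclU k m) (hcl k m) (hdisU k m)
  choose q hq0 hq1 hq01 using hq
  set θ : ι → ℕ → HilbC → ℝ :=
    fun k m y => q k m y * ∏ k' ∈ Finset.univ.erase k, (1 - q k' m y) with hθ
  have hθcont : ∀ k m, Continuous (θ k m) := by
    intro k m
    exact ((q k m).continuous).mul <| continuous_finset_prod _
      fun k' _ => continuous_const.sub (q k' m).continuous
  have hθ01 : ∀ k m y, θ k m y ∈ Icc (0:ℝ) 1 := by
    intro k m y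
    constructor
    · exact mul_nonneg (hq01 k m y).1 <| Finset.prod_nonneg fun k' _ => by
        linarith [(hq01 k' m y).2]
    · calc q k m y * ∏ k' ∈ Finset.univ.erase k, (1 - q k' m y)
          ≤ 1 * 1 := by
            apply mul_le_mul (hq01 k m y).2 ?_ ?_ zero_le_one
            · exact Finset.prod_le_one (fun k' _ => by linarith [(hq01 k' m y).2])
                (fun k' _ => by linarith [(hq01 k' m y).1])
            · exact Finset.prod_nonneg fun k' _ => by linarith [(hq01 k' m y).2]
        _ = 1 := mul_one 1
  have hθsum : ∀ m y, ∑ k, θ k m y ≤ 1 := by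
    intro m y
    exact aux_sum_mul_prod_le Finset.univ (fun k => q k m y) (fun k => hq01 k m y)
  refine ⟨fun m => ⟨fun y => ∑ k, w k * θ k m y, ?_⟩, ?_, ?_⟩
  · exact continuous_finset_sum _ fun k _ => continuous_const.mul (hθcont k m)
  · intro m y
    simp only [ContinuousMap.coe_mk]
    calc |∑ k, w k * θ k m y| ≤ ∑ k, |w k * θ k m y| := Finset.abs_sum_le_sum_abs _ _
      _ ≤ ∑ k, c * θ k m y := by
          apply Finset.sum_le_sum
          intro k _
          rw [abs_mul, abs_of_nonneg (hθ01 k m y).1]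
          exact mul_le_mul_of_nonneg_right (hw k) (hθ01 k m y).1
      _ = c * ∑ k, θ k m y := (Finset.mul_sum _ _ _).symm
      _ ≤ c * 1 := mul_le_mul_of_nonneg_left (hθsum m y) hc
      _ = c := mul_one c
  · intro y k₀ m₀ hy m hm
    have hyE : y ∈ E k₀ m := hmono k₀ hm hy
    have hq1' : q k₀ m y = 1 := hq1 k₀ m hyE
    have hq0' : ∀ k, k ≠ k₀ → q k m y = 0 := by
      intro k hk
      apply hq0 k m
      simp only [Set.mem_iUnion]
      exact ⟨k₀, by simp [Finset.mem_erase, Ne.symm hk], hyE⟩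
    simp only [ContinuousMap.coe_mk]
    rw [Finset.sum_eq_single k₀]
    · have : θ k₀ m y = 1 := by
        rw [hθ]
        simp only [hq1', one_mul]
        apply Finset.prod_eq_one
        intro k' hk'
        have : k' ≠ k₀ := by simpa [Finset.mem_erase] using hk'
        rw [hq0' k' this]; ring
      rw [this, mul_one]
    · intro k _ hk
      have : θ k m y = 0 := by rw [hθ]; simp [hq0' k hk]
      rw [this, mul_zero]
    · intro h; exact absurd (Finset.mem_univ k₀) h

/-- Collapse of a series of uniformly dominated null-convergent terms. -/
lemma aux_sumlim (a : ℕ → ℕ → ℝ) (c : ℕ → ℝ)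
    (h1 : ∀ n, Tendsto (fun m => a n m) atTop (nhds 0))
    (h2 : ∀ n m, |a n m| ≤ c n) (h3 : Summable c) :
    Tendsto (fun m => ∑ n ∈ Finset.range (m+1), a n m) atTop (nhds 0) := by
  have hc0 : ∀ n, 0 ≤ c n := fun n => le_trans (abs_nonneg _) (h2 n 0)
  rw [Metric.tendsto_atTop]
  intro ε hε
  have htail : Tendsto (fun N => ∑' n, c (n + N)) atTop (nhds 0) := by
    exact_mod_cast tendsto_sum_nat_add c
  obtain ⟨N, hN⟩ := (Metric.tendsto_atTop.mp htail (ε/2) (by linarith)).imp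
    (fun N h => h N le_rfl)
  have hNtail : ∑' n, c (n + N) < ε/2 := by
    have := hN
    rwa [Real.dist_eq, sub_zero, abs_of_nonneg (tsum_nonneg (fun n => hc0 _))] at this
  have hhead : Tendsto (fun m => ∑ n ∈ Finset.range N, a n m) atTop (nhds 0) := by
    have : Tendsto (fun m => ∑ n ∈ Finset.range N, a n m) atTop
        (nhds (∑ n ∈ Finset.range N, (0:ℝ))) :=
      tendsto_finset_sum _ (fun n _ => h1 n)
    simpa using this
  obtain ⟨M₀, hM₀⟩ := Metric.tendsto_atTop.mp hhead (ε/2) (by linarith)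
  refine ⟨max N M₀, fun m hm => ?_⟩
  have hmN : N ≤ m := le_trans (le_max_left _ _) hm
  have hmM : M₀ ≤ m := le_trans (le_max_right _ _) hm
  rw [Real.dist_eq, sub_zero]
  have hsplit : ∑ n ∈ Finset.range (m+1), a n m
      = (∑ n ∈ Finset.range N, a n m) + ∑ n ∈ Finset.Ico N (m+1), a n m := by
    rw [Finset.range_eq_Ico, Finset.range_eq_Ico]
    exact (Finset.sum_Ico_consecutive (fun n => a n m) (Nat.zero_le N) (by omega : N ≤ m+1)).symm
  rw [hsplit]
  have hb1 : |∑ n ∈ Finset.range N, a n m| < ε/2 := by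
    have := hM₀ m hmM
    rwa [Real.dist_eq, sub_zero] at this
  have hb2 : |∑ n ∈ Finset.Ico N (m+1), a n m| ≤ ∑' n, c (n + N) := by
    calc |∑ n ∈ Finset.Ico N (m+1), a n m| ≤ ∑ n ∈ Finset.Ico N (m+1), |a n m| :=
          Finset.abs_sum_le_sum_abs _ _
      _ ≤ ∑ n ∈ Finset.Ico N (m+1), c n := Finset.sum_le_sum (fun n _ => h2 n m)
      _ = ∑ k ∈ Finset.range (m+1-N), c (k + N) := by
          rw [Finset.sum_Ico_eq_sum_range]
          exact Finset.sum_congr rfl (fun k _ => by rw [Nat.add_comm])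
      _ ≤ ∑' k, c (k + N) :=
          ((summable_nat_add_iff N).2 h3).sum_le_tsum _ (fun k _ => hc0 _)
  calc |(∑ n ∈ Finset.range N, a n m) + ∑ n ∈ Finset.Ico N (m+1), a n m|
      ≤ |∑ n ∈ Finset.range N, a n m| + |∑ n ∈ Finset.Ico N (m+1), a n m| := abs_add_le _ _
    _ < ε/2 + ε/2 := by
        apply add_lt_add_of_lt_of_le hb1 (le_trans hb2 hNtail.le)
    _ = ε := add_halves ε

/-- Σ⁰₂ reduction in the Hilbert cube. -/
lemma aux_reduction {ι : Type*} [Fintype ι] [LinearOrder ι] (D : ι → ℕ → Set HilbC)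
    (hcl : ∀ k m, IsClosed (D k m)) :
    ∃ E : ι → ℕ → Set HilbC,
      (∀ k m, IsClosed (E k m)) ∧ (∀ k, Monotone (E k)) ∧
      (∀ k k' m, k ≠ k' → Disjoint (E k m) (E k' m)) ∧
      (∀ k m, E k m ⊆ ⋃ j, D k j) ∧
      (∀ y, (∃ k m, y ∈ D k m) → ∃ k m, y ∈ E k m) := by
  classical
  set B : ι → ℕ → Set HilbC :=
    fun k m => (⋃ k', ⋃ m' ∈ Finset.range m, D k' m') ∪ (⋃ k' ∈ {k' | k' < k}, D k' m)
    with hB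
  have hBcl : ∀ k m, IsClosed (B k m) := by
    intro k m
    apply IsClosed.union
    · apply isClosed_iUnion_of_finite
      intro k'
      exact (Finset.range m).finite_toSet.isClosed_biUnion fun m' _ => hcl k' m'
    · exact (Set.toFinite _).isClosed_biUnion fun k' _ => hcl k' m
  have hBsub : ∀ k k' m m', (m' < m ∨ (m' = m ∧ k' < k)) → D k' m' ⊆ B k m := by
    intro k k' m m' h
    rcases h with h | ⟨rfl, h⟩
    · intro y hy
      exact Or.inl (Set.mem_iUnion.2 ⟨k', Set.mem_biUnion (Finset.mem_range.2 h) hy⟩)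
    · intro y hy
      exact Or.inr (Set.mem_biUnion h hy)
  set Q : ι → ℕ → ℕ → Set HilbC :=
    fun k m s => D k m \ Metric.thickening (1/(s+1)) (B k m) with hQ
  have hQcl : ∀ k m s, IsClosed (Q k m s) :=
    fun k m s => (hcl k m).inter Metric.isOpen_thickening.isClosed_compl
  have hQmono : ∀ k m s s', s ≤ s' → Q k m s ⊆ Q k m s' := by
    intro k m s s' hss
    apply Set.diff_subset_diff_right
    apply Metric.thickening_mono
    have h1 : (0:ℝ) < s + 1 := by positivity
    have h2 : (s:ℝ) + 1 ≤ (s':ℝ) + 1 := by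
      have : (s:ℝ) ≤ s' := by exact_mod_cast hss
      linarith
    exact one_div_le_one_div_of_le h1 h2
  set E : ι → ℕ → Set HilbC :=
    fun k s => ⋃ m ∈ Finset.range (s+1), Q k m s with hE
  have hEcl : ∀ k s, IsClosed (E k s) :=
    fun k s => (Finset.range (s+1)).finite_toSet.isClosed_biUnion fun m _ => hQcl k m s
  have hQdisB : ∀ k m s (z : Set HilbC), z ⊆ B k m → Disjoint (Q k m s) z := by
    intro k m s z hz
    rw [Set.disjoint_left]
    intro y hy hyz
    exact hy.2 (Metric.self_subset_thickening (by positivity) _ (hz hyz))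
  refine ⟨E, hEcl, ?_, ?_, ?_, ?_⟩
  · intro k
    intro s s' hss
    intro y hy
    simp only [hE, Set.mem_iUnion] at hy ⊢
    obtain ⟨m, hm, hy⟩ := hy
    exact ⟨m, Finset.mem_range.2 (lt_of_lt_of_le (Finset.mem_range.1 hm) (by omega)),
      hQmono k m s s' hss hy⟩
  · intro k k' s hkk
    rw [Set.disjoint_left]
    intro y hy hy'
    simp only [hE, Set.mem_iUnion] at hy hy'
    obtain ⟨m, _, hym⟩ := hy
    obtain ⟨m', _, hym'⟩ := hy'
    rcases lt_trichotomy m' m with h | h | h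
    · exact Set.disjoint_left.mp (hQdisB k m s _ (hBsub k k' m m' (Or.inl h))) hym hym'.1
    · rcases lt_or_gt_of_ne hkk with hk | hk
      · exact Set.disjoint_left.mp
          (hQdisB k' m' s _ (hBsub k' k m' m (Or.inr ⟨h.symm, hk⟩))) hym' hym.1
      · exact Set.disjoint_left.mp
          (hQdisB k m s _ (hBsub k k' m m' (Or.inr ⟨h, hk⟩))) hym hym'.1
    · exact Set.disjoint_left.mp (hQdisB k' m' s _ (hBsub k' k m' m (Or.inl h))) hym' hym.1
  · intro k s
    intro y hy
    simp only [hE, Set.mem_iUnion] at hy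
    obtain ⟨m, _, hy⟩ := hy
    exact Set.mem_iUnion.2 ⟨m, hy.1⟩
  · intro y hy
    have hexm : ∃ m, ∃ k, y ∈ D k m := by
      obtain ⟨k, m, h⟩ := hy; exact ⟨m, k, h⟩
    let mstar := Nat.find hexm
    have hmstar : ∃ k, y ∈ D k mstar := Nat.find_spec hexm
    have hKne : (Finset.univ.filter (fun k => y ∈ D k mstar)).Nonempty := by
      obtain ⟨k, hk⟩ := hmstar
      exact ⟨k, by simp [hk]⟩
    let kstar := (Finset.univ.filter (fun k => y ∈ D k mstar)).min' hKne
    have hkstarD : y ∈ D kstar mstar := by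
      exact (Finset.mem_filter.mp
        ((Finset.univ.filter (fun k => y ∈ D k mstar)).min'_mem hKne)).2
    have hyB : y ∉ B kstar mstar := by
      intro hyB
      rcases hyB with h | h
      · simp only [Set.mem_iUnion] at h
        obtain ⟨k', m', hm', hy'⟩ := h
        exact Nat.find_min hexm (Finset.mem_range.mp hm') ⟨k', hy'⟩
      · simp only [Set.mem_iUnion] at h
        obtain ⟨k', hk', hy'⟩ := h
        have : kstar ≤ k' := Finset.min'_le _ _ (by simp [hy'])
        exact absurd hk' (not_lt.2 this)
    have hthick : ∃ s₁ : ℕ, y ∉ Metric.thickening (1/(s₁+1)) (B kstar mstar) := by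
      rcases Set.eq_empty_or_nonempty (B kstar mstar) with hBe | hBne
      · exact ⟨0, by rw [hBe, Metric.thickening_empty]; exact Set.notMem_empty y⟩
      · have hpos : 0 < Metric.infDist y (B kstar mstar) :=
          ((hBcl kstar mstar).notMem_iff_infDist_pos hBne).1 hyB
        obtain ⟨s₁, hs₁⟩ := exists_nat_gt (1 / Metric.infDist y (B kstar mstar))
        refine ⟨s₁, fun hmem => ?_⟩
        rw [Metric.mem_thickening_iff] at hmem
        obtain ⟨z, hz, hdz⟩ := hmem
        have h1 : Metric.infDist y (B kstar mstar) ≤ dist y z :=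
          Metric.infDist_le_dist_of_mem hz
        have h2 : 1/((s₁:ℝ)+1) < Metric.infDist y (B kstar mstar) := by
          rw [div_lt_iff₀ (by positivity)] at hs₁ ⊢
          nlinarith [hpos]
        linarith
    obtain ⟨s₁, hs₁⟩ := hthick
    refine ⟨kstar, max mstar s₁, ?_⟩
    simp only [hE, Set.mem_iUnion]
    refine ⟨mstar, Finset.mem_range.2 (by omega), hkstarD, fun hmem => ?_⟩
    apply hs₁
    apply Metric.thickening_mono ?_ _ hmem
    have h1 : (0:ℝ) < s₁ + 1 := by positivity
    have h2 : (s₁:ℝ) + 1 ≤ (max mstar s₁ : ℕ) + 1 := by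
      have : (s₁:ℝ) ≤ ((max mstar s₁ : ℕ):ℝ) := by exact_mod_cast le_max_right mstar s₁
      linarith
    exact one_div_le_one_div_of_le h1 h2

/-- A separable metric space maps into the Hilbert cube so that every closed set
is the preimage of a closed set. -/
lemma aux_embed (Y : Type*) [MetricSpace Y] [SeparableSpace Y] [Nonempty Y] :
    ∃ e : Y → HilbC, Continuous e ∧
      ∀ C : Set Y, IsClosed C → ∃ Dc : Set HilbC, IsClosed Dc ∧ e ⁻¹' Dc = C := by
  obtain ⟨u, hu⟩ := exists_dense_seq Y
  refine ⟨fun y i => ⟨min (dist y (u i)) 1, le_min dist_nonneg zero_le_one, min_le_right _ _⟩,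
    ?_, ?_⟩
  · apply continuous_pi
    intro i
    exact Continuous.subtype_mk ((continuous_id.dist continuous_const).min continuous_const) _
  · intro C hC
    refine ⟨closure ((fun y i => (⟨min (dist y (u i)) 1, le_min dist_nonneg zero_le_one,
      min_le_right _ _⟩ : unitInterval)) '' C), isClosed_closure, ?_⟩
    set e : Y → HilbC := fun y i => ⟨min (dist y (u i)) 1, le_min dist_nonneg zero_le_one,
      min_le_right _ _⟩ with he
    apply Set.Subset.antisymm
    · intro y hy
      by_contra hyC
      have hopen : IsOpen Cᶜ := hC.isOpen_compl
      obtain ⟨ε₀, hε₀, hball⟩ := Metric.isOpen_iff.mp hopen y hyC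
      set ε := min ε₀ 1 with hε
      have hεpos : 0 < ε := lt_min hε₀ one_pos
      have hε1 : ε ≤ 1 := min_le_right _ _
      have hballε : Metric.ball y ε ⊆ Cᶜ :=
        le_trans (Metric.ball_subset_ball (min_le_left _ _)) hball
      obtain ⟨i, hi⟩ := Metric.denseRange_iff.mp hu y (ε/4) (by linarith)
      have hyi : ((e y i : ℝ)) < ε/4 := by
        have : min (dist y (u i)) 1 ≤ dist y (u i) := min_le_left _ _
        simp only [he]
        exact lt_of_le_of_lt this hi
      -- open set in the cube
      have hV : IsOpen {v : HilbC | (v i : ℝ) < ε/2} := by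
        have : Continuous fun v : HilbC => (v i : ℝ) :=
          continuous_subtype_val.comp (continuous_apply i)
        exact isOpen_lt this continuous_const
      have hyV : e y ∈ {v : HilbC | (v i : ℝ) < ε/2} := by
        simp only [Set.mem_setOf_eq]
        linarith
      obtain ⟨v, hvV, hvC⟩ := mem_closure_iff.mp hy _ hV hyV
      obtain ⟨z, hzC, rfl⟩ := hvC
      have hzball : ε ≤ dist z y := by
        by_contra h
        push_neg at h
        exact (hballε (Metric.mem_ball.mpr h)) hzC
      have htri : dist z y ≤ dist z (u i) + dist y (u i) := by
        calc dist z y ≤ dist z (u i) + dist (u i) y := dist_triangle _ _ _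
          _ = dist z (u i) + dist y (u i) := by rw [dist_comm (u i) y]
      have hdzu : ε - ε/4 ≤ dist z (u i) := by linarith
      have hezi : 3*ε/4 ≤ ((e z i : ℝ)) := by
        have h34 : 3*ε/4 ≤ min (dist z (u i)) 1 := le_min (by linarith) (by linarith)
        simpa only [he] using h34
      simp only [Set.mem_setOf_eq] at hvV
      linarith
    · intro y hy
      exact subset_closure ⟨y, hy, rfl⟩

lemma aux_fsigma_iUnion {X : Type*} (t' : TopologicalSpace X) (S : ℕ → Set X)
    (h : ∀ i, ∃ C : ℕ → Set X, (∀ n, IsClosed[t'] (C n)) ∧ S i = ⋃ n, C n) :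
    ∃ C : ℕ → Set X, (∀ n, IsClosed[t'] (C n)) ∧ (⋃ i, S i) = ⋃ n, C n := by
  choose C hC hS using h
  refine ⟨fun m => C (Nat.unpair m).1 (Nat.unpair m).2, fun m => hC _ _, ?_⟩
  apply Set.Subset.antisymm
  · rintro x hx
    rw [Set.mem_iUnion] at hx
    obtain ⟨i, hi⟩ := hx
    rw [hS i, Set.mem_iUnion] at hi
    obtain ⟨j, hj⟩ := hi
    rw [Set.mem_iUnion]
    exact ⟨Nat.pair i j, by rwa [Nat.unpair_pair]⟩
  · rintro x hx
    rw [Set.mem_iUnion] at hx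
    obtain ⟨m, hm⟩ := hx
    rw [Set.mem_iUnion]
    refine ⟨(Nat.unpair m).1, ?_⟩
    rw [hS _, Set.mem_iUnion]
    exact ⟨(Nat.unpair m).2, hm⟩

lemma aux_fsigma_inter {X : Type*} (t' : TopologicalSpace X) (S T : Set X)
    (hS : ∃ C : ℕ → Set X, (∀ n, IsClosed[t'] (C n)) ∧ S = ⋃ n, C n)
    (hT : ∃ C : ℕ → Set X, (∀ n, IsClosed[t'] (C n)) ∧ T = ⋃ n, C n) :
    ∃ C : ℕ → Set X, (∀ n, IsClosed[t'] (C n)) ∧ S ∩ T = ⋃ n, C n := by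
  letI := t'
  obtain ⟨A, hAc, hAe⟩ := hS
  obtain ⟨B, hBc, hBe⟩ := hT
  set A' : ℕ → Set X := fun m => ⋃ i ∈ Finset.range (m+1), A i with hA'
  set B' : ℕ → Set X := fun m => ⋃ i ∈ Finset.range (m+1), B i with hB'
  have hA'c : ∀ m, IsClosed (A' m) :=
    fun m => (Finset.range (m+1)).finite_toSet.isClosed_biUnion fun i _ => hAc i
  have hB'c : ∀ m, IsClosed (B' m) :=
    fun m => (Finset.range (m+1)).finite_toSet.isClosed_biUnion fun i _ => hBc i
  refine ⟨fun m => A' m ∩ B' m, fun m => (hA'c m).inter (hB'c m), ?_⟩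
  apply Set.Subset.antisymm
  · rintro x ⟨hxS, hxT⟩
    rw [hAe, Set.mem_iUnion] at hxS
    rw [hBe, Set.mem_iUnion] at hxT
    obtain ⟨i, hi⟩ := hxS
    obtain ⟨j, hj⟩ := hxT
    rw [Set.mem_iUnion]
    refine ⟨max i j, ?_, ?_⟩
    · exact Set.mem_biUnion (Finset.mem_range.2 (by omega)) hi
    · exact Set.mem_biUnion (Finset.mem_range.2 (by omega)) hj
  · rintro x hx
    rw [Set.mem_iUnion] at hx
    obtain ⟨m, hm1, hm2⟩ := hx
    simp only [hA', hB', Set.mem_iUnion] at hm1 hm2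
    obtain ⟨i, _, hi⟩ := hm1
    obtain ⟨j, _, hj⟩ := hm2
    exact ⟨by rw [hAe]; exact Set.mem_iUnion.2 ⟨i, hi⟩,
      by rw [hBe]; exact Set.mem_iUnion.2 ⟨j, hj⟩⟩

/-- The main construction: a countable family of compositions with continuous
functions on the Hilbert cube that pointwise approximates every bounded function
all of whose strips are F_sigma with respect to `t'`. -/
lemma aux_big {X : Type*} [Nonempty X] (t' : TopologicalSpace X)
    (hmet : @MetrizableSpace X t') (hsep : @SeparableSpace X t') :
    ∃ (Dset : Set (X → ℝ)) (eK : X → HilbC),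
      Dset.Countable ∧
      (∀ φ ∈ Dset, ∃ F : C(HilbC, ℝ), φ = fun x => F (eK x)) ∧
      (Continuous[t', _] eK) ∧
      ∀ f : X → ℝ, ∀ M : ℝ, 1 ≤ M → (∀ x, |f x| ≤ M) →
        (∀ a b : ℝ, IsFsigmaIn t' {x | a < f x ∧ f x < b}) →
        ∃ u : ℕ → (X → ℝ), (∀ m, u m ∈ Dset) ∧
          ∀ x, Tendsto (fun m => u m x) atTop (nhds (f x)) := by
  classical
  letI := t'
  haveI : MetrizableSpace X := hmet
  haveI : SeparableSpace X := hsep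
  obtain ⟨e, hecont, heC⟩ :
      ∃ e : X → HilbC, Continuous e ∧
        ∀ C : Set X, IsClosed C → ∃ Dc : Set HilbC, IsClosed Dc ∧ e ⁻¹' Dc = C := by
    letI : MetricSpace X := TopologicalSpace.metrizableSpaceMetric X
    exact aux_embed X
  obtain ⟨uc, huc⟩ := TopologicalSpace.exists_dense_seq C(HilbC, ℝ)
  set G : List ℕ → (X → ℝ) := fun l => fun x => ((l.map uc).sum : C(HilbC,ℝ)) (e x) with hG
  refine ⟨Set.range G, e, Set.countable_range G, ?_, hecont, ?_⟩
  · rintro _ ⟨l, rfl⟩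
    exact ⟨(l.map uc).sum, rfl⟩
  intro f M hM1 hMf hstrips
  -- the grid
  set v : ℕ → ℕ → ℝ := fun n k => -M + k * (1/2)^n with hv
  set N : ℕ → ℕ := fun n => ⌈(2*M) * 2^n⌉₊ with hN
  -- strips
  set St : (n : ℕ) → Fin (N n + 1) → Set X :=
    fun n k => {x | |f x - v n k| < (1/2)^n} with hSt
  have hStFσ : ∀ n (k : Fin (N n + 1)),
      ∃ C : ℕ → Set X, (∀ i, IsClosed (C i)) ∧ St n k = ⋃ i, C i := by
    intro n k
    have : St n k = {x | v n k - (1/2)^n < f x ∧ f x < v n k + (1/2)^n} := by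
      ext x
      simp only [hSt, Set.mem_setOf_eq, abs_lt]
      constructor
      · rintro ⟨h1, h2⟩; exact ⟨by linarith, by linarith⟩
      · rintro ⟨h1, h2⟩; exact ⟨by linarith, by linarith⟩
    rw [this]
    exact hstrips _ _
  -- coverage by strips
  have hStcov : ∀ (n : ℕ) x, ∃ k : Fin (N n + 1), x ∈ St n k := by
    intro n x
    have hax := hMf x
    rw [abs_le] at hax
    set k0 : ℕ := ⌊(f x + M) * 2^n⌋₊ with hk0
    have hnn : (0:ℝ) ≤ (f x + M) * 2^n := by
      apply mul_nonneg (by linarith [hax.1]) (by positivity)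
    have hfl : (k0:ℝ) ≤ (f x + M) * 2^n := Nat.floor_le hnn
    have hfl2 : (f x + M) * 2^n < (k0:ℝ) + 1 := Nat.lt_floor_add_one _
    have hk0N : k0 ≤ N n := by
      have h2 : (f x + M) * 2^n ≤ (2*M) * 2^n := by
        apply mul_le_mul_of_nonneg_right (by linarith [hax.2]) (by positivity)
      have h3 : (2*M) * 2^n ≤ ((N n : ℕ):ℝ) := Nat.le_ceil _
      have : (k0:ℝ) ≤ ((N n : ℕ):ℝ) := le_trans hfl (le_trans h2 h3)
      exact_mod_cast this
    have hp : (0:ℝ) < (1/2)^n := by positivity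
    have key : (2:ℝ)^n * (1/2)^n = 1 := by
      rw [← mul_pow]; norm_num
    have hub : (k0:ℝ) * (1/2)^n ≤ f x + M := by
      calc (k0:ℝ) * (1/2)^n ≤ ((f x + M) * 2^n) * (1/2)^n :=
            mul_le_mul_of_nonneg_right hfl hp.le
        _ = (f x + M) * ((2:ℝ)^n * (1/2)^n) := by ring
        _ = f x + M := by rw [key, mul_one]
    have hlb : f x + M < ((k0:ℝ) + 1) * (1/2)^n := by
      calc f x + M = (f x + M) * ((2:ℝ)^n * (1/2)^n) := by rw [key, mul_one]
        _ = ((f x + M) * 2^n) * (1/2)^n := by ring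
        _ < ((k0:ℝ) + 1) * (1/2)^n := mul_lt_mul_of_pos_right hfl2 hp
    refine ⟨⟨k0, by omega⟩, ?_⟩
    simp only [hSt, Set.mem_setOf_eq, hv]
    rw [abs_lt]
    constructor
    · push_cast
      nlinarith [hp]
    · push_cast
      nlinarith [hp]
  -- bound on grid values
  have hvbound : ∀ (n : ℕ) (k : Fin (N n + 1)), |v n k| ≤ M + 1 := by
    intro n k
    have hp : (0:ℝ) < (1/2)^n := by positivity
    have hp1 : ((1:ℝ)/2)^n ≤ 1 := by
      apply pow_le_one₀ (by norm_num) (by norm_num)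
    have key : (2:ℝ)^n * (1/2)^n = 1 := by
      rw [← mul_pow]; norm_num
    have hkN : ((k:ℕ):ℝ) ≤ ((N n : ℕ):ℝ) := by
      exact_mod_cast Nat.lt_succ_iff.mp k.isLt
    have hceil : ((N n : ℕ):ℝ) < (2*M) * 2^n + 1 := by
      rw [hN]
      apply Nat.ceil_lt_add_one
      positivity
    have hkb : ((k:ℕ):ℝ) * (1/2)^n ≤ 2*M + 1 := by
      calc ((k:ℕ):ℝ) * (1/2)^n ≤ ((2*M) * 2^n + 1) * (1/2)^n := by
            apply mul_le_mul_of_nonneg_right (by linarith) hp.le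
        _ = 2*M * ((2:ℝ)^n * (1/2)^n) + (1/2)^n := by ring
        _ = 2*M + (1/2)^n := by rw [key, mul_one]
        _ ≤ 2*M + 1 := by linarith
    have hknn : (0:ℝ) ≤ ((k:ℕ):ℝ) * (1/2)^n := by positivity
    rw [hv]
    rw [abs_le]
    constructor
    · simp only; linarith
    · simp only; linarith
  -- ambient monotone closed stage families
  choose C0 hC0cl hC0eq using hStFσ
  have hDex : ∀ (n : ℕ) (k : Fin (N n + 1)) (i : ℕ),
      ∃ Dc : Set HilbC, IsClosed Dc ∧ e ⁻¹' Dc = C0 n k i :=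
    fun n k i => heC _ (hC0cl n k i)
  choose Dc hDccl hDcpre using hDex
  set DD : (n : ℕ) → Fin (N n + 1) → ℕ → Set HilbC :=
    fun n k m => ⋃ i ∈ Finset.range (m+1), Dc n k i with hDD
  have hDDcl : ∀ n (k : Fin (N n + 1)) m, IsClosed (DD n k m) :=
    fun n k m => (Finset.range (m+1)).finite_toSet.isClosed_biUnion fun i _ => hDccl n k i
  have hDDpre : ∀ n (k : Fin (N n + 1)), (⋃ m, e ⁻¹' DD n k m) = St n k := by
    intro n k
    rw [hC0eq n k]
    apply Set.Subset.antisymm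
    · rintro x hx
      rw [Set.mem_iUnion] at hx
      obtain ⟨m, hm⟩ := hx
      simp only [hDD, Set.mem_preimage, Set.mem_iUnion] at hm
      obtain ⟨i, _, hi⟩ := hm
      rw [Set.mem_iUnion]
      refine ⟨i, ?_⟩
      rw [← hDcpre n k i]; exact hi
    · rintro x hx
      rw [Set.mem_iUnion] at hx
      obtain ⟨i, hi⟩ := hx
      rw [Set.mem_iUnion]
      refine ⟨i, ?_⟩
      simp only [hDD, Set.mem_preimage, Set.mem_iUnion]
      refine ⟨i, Finset.mem_range.2 (by omega), ?_⟩
      rw [← hDcpre n k i] at hi; exact hi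
  -- reduction
  have hred := fun n => aux_reduction (DD n) (hDDcl n)
  choose E hEcl hEmono hEdis hEsub hEcov using hred
  -- X-side coverage and piece properties
  have hcov : ∀ (n : ℕ) x, ∃ (k : Fin (N n + 1)) (m : ℕ), e x ∈ E n k m := by
    intro n x
    obtain ⟨k, hk⟩ := hStcov n x
    rw [← hDDpre n k, Set.mem_iUnion] at hk
    obtain ⟨m, hm⟩ := hk
    exact hEcov n (e x) ⟨k, m, hm⟩
  have hval : ∀ (n : ℕ) x (k : Fin (N n + 1)) m, e x ∈ E n k m → x ∈ St n k := by
    intro n x k m hx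
    have := hEsub n k m hx
    rw [Set.mem_iUnion] at this
    obtain ⟨j, hj⟩ := this
    rw [← hDDpre n k, Set.mem_iUnion]
    exact ⟨j, hj⟩
  -- h functions
  set kix : (n : ℕ) → X → Fin (N n + 1) := fun n x => (hcov n x).choose with hkix
  have hkixmem : ∀ n x, ∃ m, e x ∈ E n (kix n x) m := fun n x => (hcov n x).choose_spec
  set h : ℕ → X → ℝ := fun n x => v n (kix n x) with hh
  have huniq : ∀ (n : ℕ) x (k : Fin (N n + 1)) m, e x ∈ E n k m → k = kix n x := by
    intro n x k m hx
    obtain ⟨m', hm'⟩ := hkixmem n x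
    by_contra hne
    have h1 : e x ∈ E n k (max m m') := hEmono n k (le_max_left _ _) hx
    have h2 : e x ∈ E n (kix n x) (max m m') := hEmono n _ (le_max_right _ _) hm'
    exact Set.disjoint_left.mp (hEdis n k (kix n x) (max m m') hne) h1 h2
  have hhval : ∀ (n : ℕ) x (k : Fin (N n + 1)) m, e x ∈ E n k m → h n x = v n k := by
    intro n x k m hx
    rw [hh]
    simp only
    rw [← huniq n x k m hx]
  have hherr : ∀ (n : ℕ) x, |h n x - f x| < (1/2)^n := by
    intro n x
    obtain ⟨m, hm⟩ := hkixmem n x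
    have hxSt := hval n x _ m hm
    rw [hSt] at hxSt
    rw [hh]
    simp only
    rw [abs_sub_comm]
    exact hxSt
  -- the series terms
  set g : ℕ → X → ℝ := fun n x => match n with
    | 0 => h 0 x
    | (j+1) => h (j+1) x - h j x with hg
  have hgsum : ∀ m x, ∑ n ∈ Finset.range (m+1), g n x = h m x := by
    intro m x
    induction m with
    | zero => simp [hg]
    | succ j ih => rw [Finset.sum_range_succ, ih]; simp [hg]
  set cseq : ℕ → ℝ := fun n => (M + 2) * (1/2)^n with hcseq
  have hcseq0 : ∀ n, 0 ≤ cseq n := by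
    intro n
    apply mul_nonneg (by linarith) (by positivity)
  have hgbound : ∀ n x, |g n x| ≤ cseq n := by
    intro n x
    match n with
    | 0 =>
      have h1 := hherr 0 x
      have h2 := hMf x
      rw [abs_lt] at h1
      rw [abs_le] at h2
      simp only [pow_zero] at h1
      have : g 0 x = h 0 x := rfl
      rw [this, hcseq, abs_le]
      simp only [pow_zero, mul_one]
      constructor <;> linarith [h1.1, h1.2, h2.1, h2.2]
    | (j+1) =>
      have h1 := hherr (j+1) x
      have h2 := hherr j x
      rw [abs_lt] at h1 h2
      have hps : ((1:ℝ)/2)^(j+1) = (1/2)^j * (1/2) := pow_succ _ _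
      have hpp : (0:ℝ) < (1/2)^j := by positivity
      have : g (j+1) x = h (j+1) x - h j x := rfl
      rw [this, hcseq, abs_le]
      constructor
      · simp only [hps]; nlinarith [h1.1, h2.2]
      · simp only [hps]; nlinarith [h1.2, h2.1]
  have hcsum : Summable cseq := by
    apply Summable.mul_left
    exact summable_geometric_of_lt_one (by norm_num) (by norm_num)
  -- continuous approximants for each term
  have hφex : ∀ n : ℕ, ∃ φn : ℕ → C(HilbC, ℝ), (∀ m y, |(φn m) y| ≤ cseq n) ∧
      ∀ x, ∃ m₀, ∀ m, m₀ ≤ m → (φn m) (e x) = g n x := by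
    intro n
    match n with
    | 0 =>
      have hw : ∀ k : Fin (N 0 + 1), |v 0 k| ≤ cseq 0 := by
        intro k
        rw [hcseq]
        simp only [pow_zero, mul_one]
        linarith [hvbound 0 k]
      obtain ⟨φ0, hb, hex⟩ := aux_lemP (E 0) (fun k => v 0 k) (cseq 0) (hcseq0 0)
        (hEcl 0) (hEmono 0) (hEdis 0) hw
      refine ⟨φ0, hb, ?_⟩
      intro x
      obtain ⟨k, m₀, hm₀⟩ := hcov 0 x
      refine ⟨m₀, fun m hm => ?_⟩
      rw [hex (e x) k m₀ hm₀ m hm]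
      have : g 0 x = h 0 x := rfl
      rw [this, hhval 0 x k m₀ hm₀]
    | (j+1) =>
      set c := cseq (j+1) with hc
      set wfun : Fin (N j + 1) × Fin (N (j+1) + 1) → ℝ :=
        fun p => max (-c) (min c (v (j+1) p.2 - v j p.1)) with hwfun
      set E' : Fin (N j + 1) × Fin (N (j+1) + 1) → ℕ → Set HilbC :=
        fun p m => E j p.1 m ∩ E (j+1) p.2 m with hE'
      have hcl' : ∀ p m, IsClosed (E' p m) :=
        fun p m => (hEcl j p.1 m).inter (hEcl (j+1) p.2 m)
      have hmono' : ∀ p, Monotone (E' p) := by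
        intro p m m' hmm
        exact Set.inter_subset_inter (hEmono j p.1 hmm) (hEmono (j+1) p.2 hmm)
      have hdis' : ∀ p p' m, p ≠ p' → Disjoint (E' p m) (E' p' m) := by
        intro p p' m hne
        by_cases h1 : p.1 = p'.1
        · have h2 : p.2 ≠ p'.2 := by
            intro h2; exact hne (Prod.ext h1 h2)
          exact Disjoint.mono Set.inter_subset_right Set.inter_subset_right
            (hEdis (j+1) p.2 p'.2 m h2)
        · exact Disjoint.mono Set.inter_subset_left Set.inter_subset_left
            (hEdis j p.1 p'.1 m h1)
      have hw' : ∀ p, |wfun p| ≤ c := by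
        intro p
        have hc0 : 0 ≤ c := hcseq0 _
        rw [abs_le]
        constructor
        · exact le_max_left _ _
        · exact max_le (by linarith) (min_le_left _ _)
      obtain ⟨φ1, hb, hex⟩ := aux_lemP E' wfun c (hcseq0 _) hcl' hmono' hdis' hw'
      refine ⟨φ1, hb, ?_⟩
      intro x
      obtain ⟨k1, m1, hm1⟩ := hcov j x
      obtain ⟨k2, m2, hm2⟩ := hcov (j+1) x
      have hmem : e x ∈ E' (k1, k2) (max m1 m2) :=
        ⟨hEmono j k1 (le_max_left _ _) hm1, hEmono (j+1) k2 (le_max_right _ _) hm2⟩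
      refine ⟨max m1 m2, fun m hm => ?_⟩
      rw [hex (e x) (k1, k2) (max m1 m2) hmem m hm]
      have hval1 : h j x = v j k1 := hhval j x k1 m1 hm1
      have hval2 : h (j+1) x = v (j+1) k2 := hhval (j+1) x k2 m2 hm2
      have hgx : g (j+1) x = h (j+1) x - h j x := rfl
      have hraw : v (j+1) k2 - v j k1 = g (j+1) x := by
        rw [hgx, hval1, hval2]
      have hgb := hgbound (j+1) x
      rw [abs_le] at hgb
      rw [hwfun]
      simp only
      rw [hraw]
      rw [min_eq_right hgb.2, max_eq_right hgb.1]
  choose φ hφb hφt using hφex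
  -- choose dense approximations
  have hdex : ∀ (n m : ℕ), ∃ j : ℕ, dist (uc j) (φ n m) < (1/2)^m := by
    intro n m
    obtain ⟨j, hj⟩ := Metric.denseRange_iff.mp huc (φ n m) ((1/2)^m) (by positivity)
    exact ⟨j, by rwa [dist_comm]⟩
  choose jj hjj using hdex
  -- the approximating sequence
  refine ⟨fun m => G (List.ofFn (fun i : Fin (m+1) => jj i m)), fun m => Set.mem_range_self _, ?_⟩
  intro x
  -- pointwise formula
  have hform : ∀ m, G (List.ofFn (fun i : Fin (m+1) => jj i m)) x
      = ∑ n ∈ Finset.range (m+1), (uc (jj n m)) (e x) := by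
    intro m
    show ((List.ofFn (fun i : Fin (m+1) => jj i m)).map uc).sum (e x) = _
    rw [List.map_ofFn, List.sum_ofFn]
    have h1 : ((∑ i : Fin (m+1), (uc ∘ fun i : Fin (m+1) => jj i m) i) : C(HilbC,ℝ)) (e x)
        = ∑ i : Fin (m+1), (uc (jj i m)) (e x) := by
      rw [ContinuousMap.coe_sum, Finset.sum_apply]
      simp [Function.comp]
    rw [h1]
    exact Fin.sum_univ_eq_sum_range (fun n => (uc (jj n m)) (e x)) (m+1)
  -- three-part split and limits
  have hSA : Tendsto (fun m => ∑ n ∈ Finset.range (m+1),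
      ((uc (jj n m)) (e x) - (φ n m) (e x))) atTop (nhds 0) := by
    have hb : ∀ m, ‖∑ n ∈ Finset.range (m+1), ((uc (jj n m)) (e x) - (φ n m) (e x))‖
        ≤ ((m:ℝ)+1) * (1/2)^m := by
      intro m
      calc ‖∑ n ∈ Finset.range (m+1), ((uc (jj n m)) (e x) - (φ n m) (e x))‖
          ≤ ∑ n ∈ Finset.range (m+1), ‖(uc (jj n m)) (e x) - (φ n m) (e x)‖ :=
            norm_sum_le _ _
        _ ≤ ∑ n ∈ Finset.range (m+1), (1/2)^m := by
            apply Finset.sum_le_sum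
            intro n _
            have h1 : dist ((uc (jj n m)) (e x)) ((φ n m) (e x)) ≤ dist (uc (jj n m)) (φ n m) :=
              ContinuousMap.dist_apply_le_dist _
            have h2 := hjj n m
            rw [Real.dist_eq] at h1
            rw [Real.norm_eq_abs]
            linarith
        _ = ((m:ℝ)+1) * (1/2)^m := by
            rw [Finset.sum_const, Finset.card_range]
            push_cast
            ring
    apply squeeze_zero_norm hb
    have hs : Summable (fun m : ℕ => ((m:ℝ)+1) * (1/2)^m) := by
      have h1 : Summable (fun m : ℕ => (m:ℝ) * (1/2)^m) := by
        have := summable_pow_mul_geometric_of_norm_lt_one 1 (r := (1/2:ℝ))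
          (by rw [Real.norm_eq_abs]; rw [abs_of_pos] <;> norm_num)
        simpa using this
      have h2 : Summable (fun m : ℕ => ((1:ℝ)/2)^m) :=
        summable_geometric_of_lt_one (by norm_num) (by norm_num)
      have := h1.add h2
      convert this using 2 with m
      ring
    exact hs.tendsto_atTop_zero
  have hSB : Tendsto (fun m => ∑ n ∈ Finset.range (m+1),
      ((φ n m) (e x) - g n x)) atTop (nhds 0) := by
    apply aux_sumlim _ (fun n => 2 * cseq n)
    · intro n
      obtain ⟨m₀, hm₀⟩ := hφt n x
      apply Tendsto.congr' ?_ tendsto_const_nhds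
      filter_upwards [eventually_ge_atTop m₀] with m hm
      rw [hm₀ m hm]
      ring
    · intro n m
      calc |(φ n m) (e x) - g n x| ≤ |(φ n m) (e x)| + |g n x| := abs_sub _ _
        _ ≤ cseq n + cseq n := add_le_add (hφb n m (e x)) (hgbound n x)
        _ = 2 * cseq n := by ring
    · exact hcsum.mul_left 2
  have hC : Tendsto (fun m => h m x) atTop (nhds (f x)) := by
    have h0 : Tendsto (fun m => h m x - f x) atTop (nhds 0) := by
      apply squeeze_zero_norm (fun m => ?_)
        (tendsto_pow_atTop_nhds_zero_of_lt_one (by norm_num) (by norm_num)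
          : Tendsto (fun m : ℕ => ((1:ℝ)/2)^m) atTop (nhds 0))
      rw [Real.norm_eq_abs]
      exact (hherr m x).le
    have h2 : (fun m => h m x) = fun m => (h m x - f x) + f x := by
      funext m; ring
    rw [h2]
    have h3 := h0.add (tendsto_const_nhds :
      Tendsto (fun _ : ℕ => f x) atTop (nhds (f x)))
    simpa using h3
  have hdecomp : ∀ m, ∑ n ∈ Finset.range (m+1), (uc (jj n m)) (e x)
      = (∑ n ∈ Finset.range (m+1), ((uc (jj n m)) (e x) - (φ n m) (e x)))
        + (∑ n ∈ Finset.range (m+1), ((φ n m) (e x) - g n x)) + h m x := by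
    intro m
    rw [← hgsum m x]
    rw [← Finset.sum_add_distrib, ← Finset.sum_add_distrib]
    apply Finset.sum_congr rfl
    intro n _
    ring
  have hfinal := (hSA.add hSB).add hC
  simp only [add_zero, zero_add] at hfinal
  apply hfinal.congr
  intro m
  show _ = G (List.ofFn fun i : Fin (m+1) => jj i m) x
  rw [hform m]
  exact (hdecomp m).symm

/-- If a Tychonoff space X has the OB-property then USC*_p(X) is
sequentially separable. -/
theorem statement3 {X : Type*} [TopologicalSpace X] [T35Space X] [Infinite X]
    (hOB : OBProperty X) : SeqSeparableSet (USCb X) := by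
  classical
  letI tX : TopologicalSpace X := ‹_›
  haveI : Nonempty X := inferInstance
  obtain ⟨t', hle, hmet, hsep, hOBp⟩ := hOB
  obtain ⟨Dset, eK, hDcount, hDform, hecont, happrox⟩ := aux_big t' hmet hsep
  have hFσclosed : ∀ S : Set X, IsClosed[tX] S → IsFsigmaIn t' S := fun S hS =>
    hOBp S ⟨univ, S, @isOpen_univ X tX, hS, (univ_inter S).symm⟩
  have hFσopen : ∀ S : Set X, IsOpen[tX] S → IsFsigmaIn t' S := fun S hS =>
    hOBp S ⟨S, univ, hS, @isClosed_univ X tX, (inter_univ S).symm⟩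
  refine ⟨Dset, hDcount, ?_, ?_⟩
  · -- Dset ⊆ USCb X
    intro φ hφ
    obtain ⟨F, rfl⟩ := hDform φ hφ
    constructor
    · intro a
      have hV : IsOpen (F ⁻¹' (Iio a)) := F.continuous.isOpen_preimage _ isOpen_Iio
      have : IsOpen[t'] (eK ⁻¹' (F ⁻¹' (Iio a))) := hecont.isOpen_preimage _ hV
      exact hle _ this
    · refine ⟨‖F‖, fun x => ?_⟩
      have := F.norm_coe_le_norm (eK x)
      rwa [Real.norm_eq_abs] at this
  · -- approximation
    intro f hf
    obtain ⟨hfo, M₀, hM₀⟩ := hf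
    have hstrips : ∀ a b : ℝ, IsFsigmaIn t' {x | a < f x ∧ f x < b} := by
      intro a b
      have h1 : ∀ c : ℝ, IsFsigmaIn t' {x | c < f x} := by
        intro c
        have hstep : ∀ i : ℕ, IsFsigmaIn t' {x | c + 1/((i:ℝ)+1) ≤ f x} := by
          intro i
          apply hFσclosed
          have : {x | c + 1/((i:ℝ)+1) ≤ f x} = {x | f x < c + 1/((i:ℝ)+1)}ᶜ := by
            ext x; simp [not_lt]
          rw [this]
          exact (by letI : TopologicalSpace X := tX
                    exact (hfo (c + 1/((i:ℝ)+1))).isClosed_compl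
            : IsClosed[tX] {x | f x < c + 1/((i:ℝ)+1)}ᶜ)
        have hunion : {x | c < f x} = ⋃ i : ℕ, {x | c + 1/((i:ℝ)+1) ≤ f x} := by
          ext x
          simp only [Set.mem_setOf_eq, Set.mem_iUnion]
          constructor
          · intro hx
            obtain ⟨i, hi⟩ := exists_nat_one_div_lt (show (0:ℝ) < f x - c by linarith)
            exact ⟨i, by linarith⟩
          · rintro ⟨i, hi⟩
            have : (0:ℝ) < 1/((i:ℝ)+1) := by positivity
            linarith
        rw [hunion]
        exact aux_fsigma_iUnion t' _ hstep
      have h2 : IsFsigmaIn t' {x | f x < b} := hFσopen _ (hfo b)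
      have : {x | a < f x ∧ f x < b} = {x | a < f x} ∩ {x | f x < b} := rfl
      rw [this]
      exact aux_fsigma_inter t' _ _ (h1 a) h2
    obtain ⟨u, humem, hut⟩ := happrox f (max M₀ 1) (le_max_right _ _)
      (fun x => le_trans (hM₀ x) (le_max_left _ _)) hstrips
    exact ⟨u, humem, tendsto_pi_nhds.mpr hut⟩

end Selectors
end
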